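/- Let A be an alternating automaton and let A′ be obtained from A by replacing some of its transition conditions by equivalent positive boolean formulas. Then the nondeterminism in A is history-deterministic if and only if the nondeterminism in A′ is history-deterministic, and the universality in A is history-deterministic if and only if the universality in A′ is history-deterministic. -/

import Mathlib

set_option maxHeartbeats 1000000

namespace GFG

/-- Positive boolean formulas over `Q`. -/
inductive PB (Q : Type) : Type
  | atom : Q → PB Q
  | and : PB Q → PB Q → PB Q
  | or : PB Q → PB Q → PB Q

namespace PB
variable {Q R : Type}

/-- Satisfaction of a positive boolean formula by a truth assignment. -/
def sat : PB Q → (Q → Prop) → Prop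
  | atom q, v => v q
  | and b b', v => b.sat v ∧ b'.sat v
  | or b b', v => b.sat v ∨ b'.sat v

/-- Two positive boolean formulas are equivalent if they are satisfied by exactly
the same truth assignments. -/
def Equiv (b b' : PB Q) : Prop := ∀ v : Q → Prop, b.sat v ↔ b'.sat v

/-- Dualization: swap conjunctions and disjunctions. -/
def dual : PB Q → PB Q
  | atom q => atom q
  | and b b' => or b.dual b'.dual
  | or b b' => and b.dual b'.dual

/-- The formula is a conjunction of atoms. -/
def IsConj : PB Q → Prop
  | atom _ => True
  | and b b' => b.IsConj ∧ b'.IsConj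
  | or _ _ => False

/-- The formula is a disjunction of atoms. -/
def IsDisj : PB Q → Prop
  | atom _ => True
  | and _ _ => False
  | or b b' => b.IsDisj ∧ b'.IsDisj

/-- The formula is a single atom. -/
def IsAtom : PB Q → Prop
  | atom _ => True
  | _ => False

/-- The formula is in disjunctive normal form: a disjunction of conjunctions of atoms. -/
def IsDNF : PB Q → Prop
  | atom _ => True
  | and b b' => b.IsConj ∧ b'.IsConj
  | or b b' => b.IsDNF ∧ b'.IsDNF

/-- The set of atoms occurring in a formula. -/
def atomsOf : PB Q → Set Q
  | atom q => {q}
  | and b b' => b.atomsOf ∪ b'.atomsOf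
  | or b b' => b.atomsOf ∪ b'.atomsOf

/-- `some q` if the formula is the atom `q`, else `none`. -/
def theAtom? : PB Q → Option Q
  | atom q => some q
  | _ => none

/-- Substitution of formulas for atoms. -/
def bind : PB Q → (Q → PB R) → PB R
  | atom q, f => f q
  | and b b', f => and (b.bind f) (b'.bind f)
  | or b b', f => or (b.bind f) (b'.bind f)

/-- The list of subformulas of a formula. -/
def subs : PB Q → List (PB Q)
  | atom q => [atom q]
  | and b b' => and b b' :: (b.subs ++ b'.subs)
  | or b b' => or b b' :: (b.subs ++ b'.subs)

end PB

/-- A deterministic parity automaton over the alphabet `Γ`. -/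
structure DPA (Γ : Type) : Type 1 where
  P : Type
  [finP : Finite P]
  [neP : Nonempty P]
  p0 : P
  eta : P → Γ → P
  c : P → ℕ

attribute [instance] DPA.finP DPA.neP

/-- The run of a deterministic parity automaton on an infinite word. -/
def DPA.run {Γ : Type} (D : DPA Γ) (x : ℕ → Γ) : ℕ → D.P
  | 0 => D.p0
  | n + 1 => D.eta (D.run x n) (x n)

/-- A deterministic parity automaton accepts `x` iff the largest priority seen
infinitely often along the run is even. -/
def DPA.Accepts {Γ : Type} (D : DPA Γ) (x : ℕ → Γ) : Prop :=
  ∃ k, Even k ∧ {n | D.c (D.run x n) = k}.Infinite ∧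
    ∀ j, k < j → {n | D.c (D.run x n) = j}.Finite

/-- A set of infinite words over `Γ` is ω-regular iff it is recognized by some
deterministic parity automaton. -/
def OmegaRegular {Γ : Type} (W : Set (ℕ → Γ)) : Prop :=
  ∃ D : DPA Γ, ∀ x, x ∈ W ↔ D.Accepts x

/-- An alternating word automaton with states labeled into `Γ` and acceptance set
`W ⊆ Γ^ω`. -/
structure AltAutomaton (Sig Γ : Type) : Type 1 where
  Q : Type
  [finQ : Finite Q]
  [neQ : Nonempty Q]
  init : Q
  delta : Q → Sig → PB Q
  label : Q → Γ
  W : Set (ℕ → Γ)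

attribute [instance] AltAutomaton.finQ AltAutomaton.neQ

/-- A two-player win/lose game of infinite duration, given by a move relation,
ownership of positions (`eve p` iff `p` belongs to Eve), an initial position, and
a winning condition for Eve on plays. -/
structure Game (Pos : Type) where
  move : Pos → Pos → Prop
  eve : Pos → Prop
  init : Pos
  win : (ℕ → Pos) → Prop

namespace Game
variable {Pos : Type} (G : Game Pos)

/-- A play: an infinite sequence of successive positions starting at the initial position. -/
def IsPlay (p : ℕ → Pos) : Prop := p 0 = G.init ∧ ∀ n, G.move (p n) (p (n + 1))

/-- The history of a play up to (and including) time `n`. -/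
def histOf (p : ℕ → Pos) (n : ℕ) : List Pos := (List.range (n + 1)).map p

/-- A valid finite history: a finite sequence of successive positions from the
initial position. -/
def IsHist (l : List Pos) : Prop := l.head? = some G.init ∧ l.Chain' G.move

/-- The play `p` agrees with the strategy `σ` of Eve. -/
def AgreesE (σ : List Pos → Pos) (p : ℕ → Pos) : Prop :=
  ∀ n, G.eve (p n) → p (n + 1) = σ (histOf p n)

/-- The play `p` agrees with the strategy `σ` of Adam. -/
def AgreesA (σ : List Pos → Pos) (p : ℕ → Pos) : Prop :=
  ∀ n, ¬ G.eve (p n) → p (n + 1) = σ (histOf p n)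

/-- `σ` is a winning strategy for Eve: it proposes legal moves at all of Eve's
positions reachable along valid histories, and every play agreeing with it is won by Eve. -/
def WinsEve (σ : List Pos → Pos) : Prop :=
  (∀ (l : List Pos) (x : Pos), G.IsHist (l ++ [x]) → G.eve x → G.move x (σ (l ++ [x]))) ∧
  (∀ p, G.IsPlay p → G.AgreesE σ p → G.win p)

/-- `σ` is a winning strategy for Adam. -/
def WinsAdam (σ : List Pos → Pos) : Prop :=
  (∀ (l : List Pos) (x : Pos), G.IsHist (l ++ [x]) → ¬ G.eve x → G.move x (σ (l ++ [x]))) ∧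
  (∀ p, G.IsPlay p → G.AgreesA σ p → ¬ G.win p)

/-- Eve has a winning strategy in `G`. -/
def EveWins : Prop := ∃ σ, G.WinsEve σ

/-- Adam has a winning strategy in `G`. -/
def AdamWins : Prop := ∃ σ, G.WinsAdam σ

end Game

/-- `s` is the subsequence of values selected by `sel` along `p`,
in order and exhaustively. -/
def IsSubseqOn {X Y : Type} (sel : X → Option Y) (p : ℕ → X) (s : ℕ → Y) : Prop :=
  ∃ ix : ℕ → ℕ, StrictMono ix ∧ (∀ n, sel (p (ix n)) = some (s n)) ∧
    ∀ m, (sel (p m)).isSome → ∃ n, ix n = m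

variable {Sig Gam : Type}

/-- Moves of the model-checking game `G(w, A)`. -/
def mcMove (A : AltAutomaton Sig Gam) (w : ℕ → Sig) :
    (ℕ × PB A.Q) → (ℕ × PB A.Q) → Prop
  | (i, PB.atom q), (j, b) => j = i + 1 ∧ b = A.delta q (w i)
  | (i, PB.and b b'), (j, c) => j = i ∧ (c = b ∨ c = b')
  | (i, PB.or b b'), (j, c) => j = i ∧ (c = b ∨ c = b')

/-- The model-checking (membership) game `G(w, A)`. Disjunction positions belong to Eve;
conjunction and atom positions (the latter having a unique successor) belong to Adam.
Eve wins a play iff its state-sequence satisfies the acceptance condition. -/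
def mcGame (A : AltAutomaton Sig Gam) (w : ℕ → Sig) : Game (ℕ × PB A.Q) where
  move := mcMove A w
  eve := fun p => match p.2 with
    | PB.or _ _ => True
    | _ => False
  init := (0, PB.atom A.init)
  win := fun p => ∀ ρ : ℕ → A.Q, IsSubseqOn (fun x => x.2.theAtom?) p ρ →
    (fun n => A.label (ρ n)) ∈ A.W

/-- `A` accepts `w` iff Eve has a winning strategy in the model-checking game. -/
def AltAutomaton.Accepts (A : AltAutomaton Sig Gam) (w : ℕ → Sig) : Prop :=
  (mcGame A w).EveWins

/-- The language of `A`. -/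
def AltAutomaton.lang (A : AltAutomaton Sig Gam) : Set (ℕ → Sig) :=
  {w | A.Accepts w}

/-- A uniform strategy: a function of the word prefix read so far and the sequence of
transition conditions visited so far. -/
abbrev UStrat (Sig Q : Type) := List Sig → List (PB Q) → PB Q

/-- The prefix `w₀ … w_{i-1}` of an infinite word. -/
def wordPrefix (w : ℕ → Sig) (i : ℕ) : List Sig := (List.range i).map w

/-- The strategy in the model-checking game `G(w, A)` induced by following the uniform
strategy `τ` (at atom positions it takes the unique move). -/
def follow (A : AltAutomaton Sig Gam) (w : ℕ → Sig) (τ : UStrat Sig A.Q)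
    (hs : List (ℕ × PB A.Q)) : ℕ × PB A.Q :=
  match hs.getLast?.getD (0, PB.atom A.init) with
  | (i, PB.atom q) => (i + 1, A.delta q (w i))
  | (i, PB.and _ _) => (i, τ (wordPrefix w i) (hs.map Prod.snd))
  | (i, PB.or _ _) => (i, τ (wordPrefix w i) (hs.map Prod.snd))

/-- The nondeterminism in `A` is history-deterministic. -/
def NondetHD (A : AltAutomaton Sig Gam) : Prop :=
  ∃ τ : UStrat Sig A.Q, ∀ w ∈ A.lang, (mcGame A w).WinsEve (follow A w τ)

/-- The universality in `A` is history-deterministic. -/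
def UnivHD (A : AltAutomaton Sig Gam) : Prop :=
  ∃ τ : UStrat Sig A.Q, ∀ w ∉ A.lang, (mcGame A w).WinsAdam (follow A w τ)

/-- `A` is history-deterministic. -/
def HistoryDet (A : AltAutomaton Sig Gam) : Prop := NondetHD A ∧ UnivHD A

/-- Moves of the letter games: at an atom a letter is picked and the transition condition
is unfolded, at conjunctions and disjunctions a subformula is picked (with empty letter). -/
def letterMove (A : AltAutomaton Sig Gam) :
    (Option Sig × PB A.Q) → (Option Sig × PB A.Q) → Prop
  | (_, PB.atom q), (σ, b) => ∃ a : Sig, σ = some a ∧ b = A.delta q a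
  | (_, PB.and b b'), (σ, c) => σ = none ∧ (c = b ∨ c = b')
  | (_, PB.or b b'), (σ, c) => σ = none ∧ (c = b ∨ c = b')

/-- Eve's letter game: Adam picks the letters and resolves conjunctions, Eve resolves
disjunctions. Eve wins a play iff the word played is not in `L(A)` or the state-sequence
satisfies the acceptance condition. -/
def eveLetterGame (A : AltAutomaton Sig Gam) : Game (Option Sig × PB A.Q) where
  move := letterMove A
  eve := fun p => match p.2 with
    | PB.or _ _ => True
    | _ => False
  init := (none, PB.atom A.init)
  win := fun p => ∀ (w : ℕ → Sig) (ρ : ℕ → A.Q),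
    IsSubseqOn (fun x => x.1) p w → IsSubseqOn (fun x => x.2.theAtom?) p ρ →
    (w ∉ A.lang ∨ (fun n => A.label (ρ n)) ∈ A.W)

/-- Adam's letter game: Eve picks the letters and resolves disjunctions, Adam resolves
conjunctions. Adam wins a play iff the word played is in `L(A)` or the state-sequence does
not satisfy the acceptance condition (stated below as Eve's winning condition, negated). -/
def adamLetterGame (A : AltAutomaton Sig Gam) : Game (Option Sig × PB A.Q) where
  move := letterMove A
  eve := fun p => match p.2 with
    | PB.and _ _ => False
    | _ => True
  init := (none, PB.atom A.init)
  win := fun p => ∀ (w : ℕ → Sig) (ρ : ℕ → A.Q),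
    IsSubseqOn (fun x => x.1) p w → IsSubseqOn (fun x => x.2.theAtom?) p ρ →
    (w ∉ A.lang ∧ (fun n => A.label (ρ n)) ∈ A.W)

/-- The strategy in a letter game induced by following the uniform strategy `τ`. -/
def letterFollow (A : AltAutomaton Sig Gam) (τ : UStrat Sig A.Q)
    (hs : List (Option Sig × PB A.Q)) : Option Sig × PB A.Q :=
  (none, τ (hs.filterMap Prod.fst) (hs.map Prod.snd))

/-- The nondeterminism in `A` is compliant with the letter games. -/
def NondetCompliant (A : AltAutomaton Sig Gam) : Prop := (eveLetterGame A).EveWins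

/-- The universality in `A` is compliant with the letter games. -/
def UnivCompliant (A : AltAutomaton Sig Gam) : Prop := (adamLetterGame A).AdamWins

/-- `A` is compliant with the letter games. -/
def LetterCompliant (A : AltAutomaton Sig Gam) : Prop := NondetCompliant A ∧ UnivCompliant A

/-- A `Sig`-arena. -/
structure Arena (Sig : Type) : Type 1 where
  V : Type
  X : V → V → Prop
  VE : V → Prop
  C : V → Sig
  v0 : V
  total : ∀ v, ∃ v', X v v'

/-- The game on the arena `R` with winning condition `L`. -/
def arenaGame (R : Arena Sig) (L : Set (ℕ → Sig)) : Game R.V where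
  move := R.X
  eve := R.VE
  init := R.v0
  win := fun p => (fun n => R.C (p n)) ∈ L

/-- Moves of the synchronized product `R × A`. -/
def prodMove (R : Arena Sig) (A : AltAutomaton Sig Gam) :
    (R.V × PB A.Q) → (R.V × PB A.Q) → Prop
  | (v, PB.atom q), (v', b) => R.X v v' ∧ b = A.delta q (R.C v')
  | (v, PB.and b b'), (v', c) => v' = v ∧ (c = b ∨ c = b')
  | (v, PB.or b b'), (v', c) => v' = v ∧ (c = b ∨ c = b')

/-- The synchronized product game `R × A`. -/
def prodGame (R : Arena Sig) (A : AltAutomaton Sig Gam) : Game (R.V × PB A.Q) where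
  move := prodMove R A
  eve := fun p => match p.2 with
    | PB.atom _ => R.VE p.1
    | PB.or _ _ => True
    | PB.and _ _ => False
  init := (R.v0, A.delta A.init (R.C R.v0))
  win := fun p => ∀ ρ : ℕ → A.Q, IsSubseqOn (fun x => x.2.theAtom?) p ρ →
    (fun n => A.label (ρ n)) ∈ A.W

/-- `A` is good for game composition. -/
def GoodForGames (A : AltAutomaton Sig Gam) : Prop :=
  ∀ R : Arena Sig, ((arenaGame R A.lang).EveWins ↔ (prodGame R A).EveWins)

/-- The composition `B × A` of an automaton `B` with `Sig`-labeled states with the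
automaton `A` over `Sig`. -/
def compose {Sig' : Type} (B : AltAutomaton Sig' Sig) (A : AltAutomaton Sig Gam) :
    AltAutomaton Sig' Gam where
  Q := B.Q × A.Q
  init := (B.init, A.init)
  delta := fun p a => (B.delta p.1 a).bind fun qB' =>
    (A.delta p.2 (B.label qB')).bind fun qA' => PB.atom (qB', qA')
  label := fun p => A.label p.2
  W := A.W

/-- `A` is good for automata composition: composing with any alternating automaton `B`
whose acceptance condition is `L(A)` preserves the language. -/
def GoodForAutomata (A : AltAutomaton Sig Gam) : Prop :=
  ∀ (Sig' : Type) (B : AltAutomaton Sig' Sig), B.W = A.lang →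
    (compose B A).lang = B.lang

/-- The underlying graph of the arena is a tree rooted at the initial node: every node is
reached from the root by a unique path. -/
def Arena.IsTree (R : Arena Sig) : Prop :=
  ∀ v : R.V, ∃! l : List R.V,
    l.head? = some R.v0 ∧ l.getLast? = some v ∧ l.Chain' R.X

/-- The arena with ownership of positions reassigned. -/
def Arena.reassign (R : Arena Sig) (E : R.V → Prop) : Arena Sig :=
  { R with VE := E }

/-- A branch of (the tree underlying) an arena. -/
def Arena.Branch (R : Arena Sig) (p : ℕ → R.V) : Prop :=
  p 0 = R.v0 ∧ ∀ n, R.X (p n) (p (n + 1))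

/-- `R` is a one-player arena. -/
def Arena.OnePlayer (R : Arena Sig) : Prop := (∀ v, R.VE v) ∨ (∀ v, ¬ R.VE v)

/-- `A` is good for trees: its universal expansion accepts exactly the trees all of whose
branches are in `L(A)`, and its existential expansion accepts exactly the trees having a
branch in `L(A)`. -/
def GoodForTrees (A : AltAutomaton Sig Gam) : Prop :=
  ∀ R : Arena Sig, R.IsTree →
    (((prodGame (R.reassign fun _ => False) A).EveWins ↔
        ∀ p : ℕ → R.V, R.Branch p → (fun n => R.C (p n)) ∈ A.lang) ∧
     ((prodGame (R.reassign fun _ => True) A).EveWins ↔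
        ∃ p : ℕ → R.V, R.Branch p ∧ (fun n => R.C (p n)) ∈ A.lang))

/-- `A` is nondeterministic: all transition conditions are disjunctions of atoms. -/
def AltAutomaton.IsNondet (A : AltAutomaton Sig Gam) : Prop :=
  ∀ q a, (A.delta q a).IsDisj

/-- `A` is universal: all transition conditions are conjunctions of atoms. -/
def AltAutomaton.IsUniv (A : AltAutomaton Sig Gam) : Prop :=
  ∀ q a, (A.delta q a).IsConj

/-- `A` is deterministic: all transition conditions are atoms. -/
def AltAutomaton.IsDet (A : AltAutomaton Sig Gam) : Prop :=
  ∀ q a, (A.delta q a).IsAtom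

/-- The Büchi acceptance set over `Bool`-labelings: `true` occurs infinitely often. -/
def BuchiW : Set (ℕ → Bool) := {x | {n | x n = true}.Infinite}

/-- The co-Büchi acceptance set over `Bool`-labelings: `false` occurs finitely often. -/
def CoBuchiW : Set (ℕ → Bool) := {x | {n | x n = false}.Finite}

/-- The edge relation of the graph induced by the transition function. -/
def edgeRel (A : AltAutomaton Sig Gam) (q q' : A.Q) : Prop :=
  ∃ a, q' ∈ (A.delta q a).atomsOf

/-- A Büchi automaton (with `Bool` labels) is weak if in every strongly connected component
all states have the same label. -/
def IsWeak (A : AltAutomaton Sig Bool) : Prop :=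
  ∀ q q', Relation.ReflTransGen (edgeRel A) q q' → Relation.ReflTransGen (edgeRel A) q' q →
    A.label q = A.label q'


/-! ### Generic auxiliary machinery for statement 4 -/

theorem PB.sat_mono {Q : Type} {v v' : Q → Prop} (h : ∀ q, v q → v' q) {b : PB Q}
    (hb : b.sat v) : b.sat v' := by
  induction b with
  | atom q => exact h q hb
  | and a b iha ihb => exact ⟨iha hb.1, ihb hb.2⟩
  | or a b iha ihb => exact hb.elim (fun x => Or.inl (iha x)) (fun x => Or.inr (ihb x))

theorem PB.sat_congr {Q : Type} {v v' : Q → Prop} (h : ∀ q, v q ↔ v' q) {b : PB Q} :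
    b.sat v ↔ b.sat v' :=
  ⟨fun hb => PB.sat_mono (fun q => (h q).1) hb, fun hb => PB.sat_mono (fun q => (h q).2) hb⟩

theorem getElem_append_sing_lt {P : Type} {l : List P} {y : P} {i : ℕ} (h : i < l.length) :
    (l ++ [y])[i]'(by rw [List.length_append]; omega) = l[i]'h :=
  List.getElem_append_left h

theorem getElem_append_sing_eq {P : Type} {l : List P} {y : P} :
    (l ++ [y])[l.length]'(by simp) = y := by
  simp

theorem getLast?_getElem {P : Type} {l : List P} {x : P} (h : l.getLast? = some x)
    {k : ℕ} (hk : k + 1 = l.length) : l[k]'(lt_of_lt_of_eq (Nat.lt_succ_self k) hk) = x := by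
  have hlen : l.length - 1 = k := by omega
  rw [List.getLast?_eq_getElem?, hlen,
    List.getElem?_eq_getElem (lt_of_lt_of_eq (Nat.lt_succ_self k) hk)] at h
  exact Option.some.inj h

/-- A history consistent with moves `mv`, starting at `i0`, following strategy `σ`
at all positions satisfying `ev`. -/
structure OkHist {P : Type} (mv : P → P → Prop) (ev : P → Prop)
    (σ : List P → P) (i0 : P) (m : List P) : Prop where
  head : m.head? = some i0
  chain : m.Chain' mv
  cons : ∀ k, (hk : k + 1 < m.length) → ev (m[k]'(by omega)) →
    m[k + 1]'hk = σ (m.take (k + 1))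

theorem OkHist.ne_nil {P : Type} {mv ev σ} {i0 : P} {m : List P}
    (h : OkHist mv ev σ i0 m) : m ≠ [] := by
  rintro rfl; exact (by simpa using h.head)

theorem okHist_singleton {P : Type} (mv : P → P → Prop) (ev : P → Prop)
    (σ : List P → P) (i0 : P) : OkHist mv ev σ i0 [i0] := by
  refine ⟨rfl, List.isChain_singleton _, ?_⟩
  intro k hk
  simp at hk

theorem OkHist.snoc {P : Type} {mv : P → P → Prop} {ev : P → Prop} {σ : List P → P}
    {i0 : P} {m : List P} {x y : P}
    (h : OkHist mv ev σ i0 m) (hl : m.getLast? = some x)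
    (hmv : mv x y) (hc : ev x → y = σ m) : OkHist mv ev σ i0 (m ++ [y]) := by
  have hne : m ≠ [] := h.ne_nil
  refine ⟨?_, ?_, ?_⟩
  · obtain ⟨a, t, rfl⟩ := List.exists_cons_of_ne_nil hne
    simpa using h.head
  · refine List.isChain_append.2 ⟨h.chain, List.isChain_singleton _, ?_⟩
    intro a ha b hb
    simp only [List.head?_cons, Option.mem_def, Option.some.injEq] at hb
    rw [hl] at ha
    simp only [Option.mem_def, Option.some.injEq] at ha
    subst ha; subst hb; exact hmv
  · intro k hk hev
    have hk' : k + 1 < m.length + 1 := by simpa using hk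
    rcases lt_or_ge (k + 1) m.length with hlt | hge
    · have h1 : (m ++ [y])[k]'(by rw [List.length_append]; omega) = m[k]'(by omega) :=
        getElem_append_sing_lt (by omega)
      have h2 : (m ++ [y])[k + 1]'hk = m[k + 1]'hlt :=
        getElem_append_sing_lt hlt
      have h3 : (m ++ [y]).take (k + 1) = m.take (k + 1) :=
        List.take_append_of_le_length (by omega)
      rw [h2, h3]
      exact h.cons k hlt (by rwa [h1] at hev)
    · have hk1 : k + 1 = m.length := by omega
      have hxk : m[k]'(by omega) = x := getLast?_getElem hl hk1
      have h1 : (m ++ [y])[k]'(by rw [List.length_append]; omega) = m[k]'(by omega) :=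
        getElem_append_sing_lt (by omega)
      have h2 : (m ++ [y])[k + 1]'hk = y := by
        have hz : k + 1 - m.length = 0 := by omega
        rw [List.getElem_append_right (by omega : m.length ≤ k + 1)]
        simp [hz]
      have h3 : (m ++ [y]).take (k + 1) = m := by
        rw [hk1]; exact List.take_left
      rw [h2, h3]
      apply hc
      rwa [h1, hxk] at hev

/-- The list of selected values along the first `m` steps of `x`. -/
def FL {X Y : Type} (sel : X → Option Y) (x : ℕ → X) (m : ℕ) : List Y :=
  ((List.range m).map x).filterMap sel

theorem FL_succ {X Y : Type} (sel : X → Option Y) (x : ℕ → X) (m : ℕ) :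
    FL sel x (m + 1) = FL sel x m ++ (sel (x m)).toList := by
  unfold FL
  rw [List.range_succ, List.map_append, List.filterMap_append]
  cases h : sel (x m) <;> simp [h]

theorem FL_prefix {X Y : Type} (sel : X → Option Y) (x : ℕ → X) {m m' : ℕ}
    (h : m ≤ m') : FL sel x m <+: FL sel x m' := by
  induction m' with
  | zero => simp_all
  | succ n ih =>
    rcases Nat.lt_or_ge m (n + 1) with h' | h'
    · exact (ih (by omega)).trans ⟨(sel (x n)).toList, (FL_succ sel x n).symm⟩
    · have : m = n + 1 := by omega
      subst this; exact List.prefix_rfl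

theorem subseq_getElem {X Y : Type} {sel : X → Option Y} {x : ℕ → X} {ρ : ℕ → Y}
    (h : IsSubseqOn sel x ρ) (m : ℕ) :
    FL sel x m = (List.range (FL sel x m).length).map ρ := by
  obtain ⟨ix, hmono, hsome, hexh⟩ := h
  suffices H : ∀ m, FL sel x m = (List.range (FL sel x m).length).map ρ ∧
      (∀ n, ix n < m ↔ n < (FL sel x m).length) from (H m).1
  intro m
  induction m with
  | zero => constructor <;> simp [FL]
  | succ m ih =>
    rcases ih with ⟨h1, h2⟩
    rw [FL_succ]
    cases hx : sel (x m) with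
    | none =>
      have hlen : (FL sel x m ++ (Option.none (α := Y)).toList).length = (FL sel x m).length := by
        simp
      constructor
      · simpa using h1
      · intro n
        rw [hlen, ← h2 n]
        have : ix n ≠ m := by
          intro he
          have := hsome n
          rw [he, hx] at this
          cases this
        omega
    | some y =>
      have hL : ix (FL sel x m).length = m := by
        obtain ⟨n₀, hn₀⟩ := hexh m (by simp [hx])
        rcases lt_trichotomy n₀ (FL sel x m).length with h' | h' | h'
        · have : ix n₀ < m := (h2 n₀).2 h'
          omega
        · exact h' ▸ hn₀
        · exfalso
          have h3 : ix (FL sel x m).length < ix n₀ := hmono h'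
          rw [hn₀] at h3
          have := (h2 (FL sel x m).length).1 h3
          omega
      have hy : y = ρ (FL sel x m).length := by
        have := hsome (FL sel x m).length
        rw [hL, hx] at this
        exact Option.some.inj this
      have hlen : (FL sel x m ++ (Option.some y).toList).length = (FL sel x m).length + 1 := by
        simp
      constructor
      · rw [hlen, List.range_succ, List.map_append, ← h1]
        simp [hy]
      · intro n
        rw [hlen]
        constructor
        · intro hn
          rcases Nat.lt_or_ge (ix n) m with h' | h'
          · have := (h2 n).1 h'
            omega
          · have hixn : ix n = m := by omega
            have : n = (FL sel x m).length := hmono.injective (by rw [hixn, hL])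
            omega
        · intro hn
          rcases Nat.lt_or_ge n (FL sel x m).length with h' | h'
          · have := (h2 n).2 h'
            omega
          · have : n = (FL sel x m).length := by omega
            subst this
            omega

theorem exists_subseq {X Y : Type} (sel : X → Option Y) (x : ℕ → X)
    (hinf : {k | (sel (x k)).isSome}.Infinite) : ∃ ρ, IsSubseqOn sel x ρ := by
  classical
  set Pp : ℕ → Prop := fun k => (sel (x k)).isSome with hPp
  have hinf' : (setOf Pp).Infinite := hinf
  have hmem : ∀ n, Pp (Nat.nth Pp n) := fun n => Nat.nth_mem_of_infinite hinf' n
  refine ⟨fun n => (sel (x (Nat.nth Pp n))).get (hmem n), Nat.nth Pp,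
    Nat.nth_strictMono hinf', fun n => (Option.some_get (hmem n)).symm, ?_⟩
  intro m hm
  exact ⟨Nat.count Pp m, Nat.nth_count hm⟩

theorem infinite_of_FL_unbounded {X Y : Type} {sel : X → Option Y} {x : ℕ → X}
    (h : ∀ c, ∃ m, c < (FL sel x m).length) : {k | (sel (x k)).isSome}.Infinite := by
  apply Set.infinite_of_not_bddAbove
  rintro ⟨N, hN⟩
  have hstab : ∀ m', N + 1 ≤ m' → FL sel x m' = FL sel x (N + 1) := by
    intro m' hm'
    induction m' with
    | zero => omega
    | succ n ih =>
      rcases Nat.lt_or_ge n (N + 1) with h' | h'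
      · have hnn : n + 1 = N + 1 := by omega
        rw [hnn]
      · rw [FL_succ, ih h']
        have hns : ¬ (sel (x n)).isSome := by
          intro hs
          have := hN (Set.mem_setOf.2 hs)
          omega
        cases hs : sel (x n)
        · simp
        · exact absurd (by simp [hs]) hns
  obtain ⟨m, hm⟩ := h (FL sel x (N + 1)).length
  rcases Nat.lt_or_ge m (N + 1) with h' | h'
  · have := (FL_prefix sel x h'.le).length_le
    omega
  · rw [hstab m h'] at hm
    omega

theorem head?_getElem {P : Type} {l : List P} {x : P} (h : l.head? = some x)
    (h0 : 0 < l.length) : l[0]'h0 = x := by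
  rw [List.head?_eq_getElem?, List.getElem?_eq_getElem h0] at h
  exact Option.some.inj h

theorem subseq_FL_getElem {X Y : Type} {sel : X → Option Y} {x : ℕ → X} {ρ : ℕ → Y}
    (h : IsSubseqOn sel x ρ) (m j : ℕ) (hj : j < (FL sel x m).length) :
    (FL sel x m)[j]'hj = ρ j := by
  have h9 : (FL sel x m)[j]? = some (ρ j) := by
    rw [subseq_getElem h m, List.getElem?_eq_getElem (by simpa using hj)]
    simp
  rw [List.getElem?_eq_getElem hj] at h9
  exact Option.some.inj h9

theorem subseq_unique {X Y : Type} {sel : X → Option Y} {x : ℕ → X}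
    (hcnt : ∀ c, ∃ m, c < (FL sel x m).length) {ρ ρ' : ℕ → Y}
    (h : IsSubseqOn sel x ρ) (h' : IsSubseqOn sel x ρ') : ρ = ρ' := by
  funext j
  obtain ⟨m, hm⟩ := hcnt j
  have v1 := subseq_FL_getElem h m j hm
  have v2 := subseq_FL_getElem h' m j hm
  rw [v1] at v2
  exact v2

theorem playLift {P Y : Type} (mv : P → P → Prop) (ev : P → Prop) (σ : List P → P)
    (i0 : P) (sel : P → Option Y) (p : ℕ → P) (M : ℕ → List P)
    (hOk : ∀ n, OkHist mv ev σ i0 (M n))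
    (hpre : ∀ n, M n <+: M (n + 1))
    (hat : ∀ n, (M n).filterMap sel = FL sel p (n + 1))
    (hlen : ∀ k, ∃ n, k < (M n).length)
    (hcnt : ∀ c, ∃ n, c < (FL sel p (n + 1)).length) :
    ∃ pt : ℕ → P, pt 0 = i0 ∧ (∀ k, mv (pt k) (pt (k + 1))) ∧
      (∀ k, ev (pt k) → pt (k + 1) = σ ((List.range (k + 1)).map pt)) ∧
      (∀ ρ : ℕ → Y, IsSubseqOn sel p ρ ↔ IsSubseqOn sel pt ρ) := by
  classical
  have hpre' : ∀ {n n'}, n ≤ n' → M n <+: M n' := by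
    intro n n' h
    induction n', h using Nat.le_induction with
    | base => exact List.prefix_rfl
    | succ n' hn ih => exact ih.trans (hpre n')
  set pt : ℕ → P := fun k => (M (hlen k).choose).getD k i0 with hpt
  have coh : ∀ n k, (hk : k < (M n).length) → (M n)[k]'hk = pt k := by
    intro n k hk
    have hk2 := (hlen k).choose_spec
    rcases le_total n (hlen k).choose with h | h
    · rw [hpt]; simp only
      rw [List.getD_eq_getElem _ _ hk2]
      exact (hpre' h).getElem hk
    · rw [hpt]; simp only
      rw [List.getD_eq_getElem _ _ hk2]
      exact ((hpre' h).getElem hk2).symm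
  have hMne : ∀ n, 0 < (M n).length := fun n => List.length_pos_iff.2 (hOk n).ne_nil
  have hhist : ∀ n k, (hk : k < (M n).length) →
      (List.range (k + 1)).map pt = (M n).take (k + 1) := by
    intro n k hk
    apply List.ext_getElem
    · simp; omega
    · intro j h1 h2
      have hj : j < k + 1 := by simpa using h1
      have hjk : j < (M n).length := by omega
      rw [List.getElem_take]
      have : ((List.range (k + 1)).map pt)[j]'h1 = pt j := by simp
      rw [this]
      exact (coh n j hjk).symm
  have hpt0 : pt 0 = i0 := by
    rw [← coh 0 0 (hMne 0)]
    exact head?_getElem (hOk 0).head (hMne 0)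
  have hmove : ∀ k, mv (pt k) (pt (k + 1)) := by
    intro k
    obtain ⟨n, hn⟩ := hlen (k + 1)
    have hc := (hOk n).chain
    replace hc := List.isChain_iff_getElem.1 hc
    have hck := hc k (by omega)
    rw [coh n k (by omega), coh n (k + 1) hn] at hck
    exact hck
  have hagree : ∀ k, ev (pt k) → pt (k + 1) = σ ((List.range (k + 1)).map pt) := by
    intro k hev
    obtain ⟨n, hn⟩ := hlen (k + 1)
    have hck := (hOk n).cons k hn (by rw [coh n k (by omega)]; exact hev)
    rw [coh n (k + 1) hn] at hck
    rw [hck, hhist n k (by omega)]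
  have hFLpt : ∀ n, FL sel pt (M n).length = FL sel p (n + 1) := by
    intro n
    have h1 : (List.range (M n).length).map pt = M n := by
      have := hhist n ((M n).length - 1) (by have := hMne n; omega)
      rw [show (M n).length - 1 + 1 = (M n).length by have := hMne n; omega] at this
      rw [this, List.take_length]
    rw [FL, h1, hat n]
  have hcnt' : ∀ c, ∃ m, c < (FL sel pt m).length := by
    intro c
    obtain ⟨n, hn⟩ := hcnt c
    exact ⟨(M n).length, by rw [hFLpt n]; exact hn⟩
  have hcntp : ∀ c, ∃ m, c < (FL sel p m).length := by
    intro c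
    obtain ⟨n, hn⟩ := hcnt c
    exact ⟨n + 1, hn⟩
  obtain ⟨ρp, hρp⟩ := exists_subseq sel p (infinite_of_FL_unbounded hcntp)
  obtain ⟨ρt, hρt⟩ := exists_subseq sel pt (infinite_of_FL_unbounded hcnt')
  have hcross : ρp = ρt := by
    funext j
    obtain ⟨n, hn⟩ := hcnt j
    have v1 := subseq_FL_getElem hρp (n + 1) j hn
    have v2 := subseq_FL_getElem hρt (M n).length j (by rw [hFLpt n]; exact hn)
    rw [← v1]
    rw [← v2]
    congr 1
    exact (hFLpt n).symm
  refine ⟨pt, hpt0, hmove, hagree, ?_⟩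
  intro ρ
  constructor
  · intro h
    have : ρ = ρp := subseq_unique hcntp h hρp
    rw [this, hcross]
    exact hρt
  · intro h
    have : ρ = ρt := subseq_unique hcnt' h hρt
    rw [this, ← hcross]
    exact hρp

/-! ### Game-specific machinery -/

/-- Eve's positions in the model-checking game. -/
def evE {Q : Type} : ℕ × PB Q → Prop := fun p => match p.2 with
  | PB.or _ _ => True
  | _ => False

/-- Adam's positions. -/
def evA {Q : Type} : ℕ × PB Q → Prop := fun p => ¬ evE p

/-- Replace the transition function of an automaton. -/
def reD {Sig Gam : Type} (A : AltAutomaton Sig Gam) (d' : A.Q → Sig → PB A.Q) :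
    AltAutomaton Sig Gam := { A with delta := d' }

/-- Initial position. -/
def mI {Sig Gam : Type} (A : AltAutomaton Sig Gam) : ℕ × PB A.Q := (0, PB.atom A.init)

theorem mcGame_eve_eq {Sig Gam : Type} (A : AltAutomaton Sig Gam) (w : ℕ → Sig) :
    (mcGame A w).eve = evE := by
  funext p
  rcases p with ⟨i, b⟩
  cases b <;> rfl

theorem mcMove_atom_iff {Sig Gam : Type} (A : AltAutomaton Sig Gam) (w : ℕ → Sig)
    (i : ℕ) (q : A.Q) (y : ℕ × PB A.Q) :
    mcMove A w (i, PB.atom q) y ↔ y = (i + 1, A.delta q (w i)) := by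
  rcases y with ⟨j, c⟩
  show (j = i + 1 ∧ c = A.delta q (w i)) ↔ _
  rw [Prod.mk.injEq]

theorem mcMove_and_iff {Sig Gam : Type} (A : AltAutomaton Sig Gam) (w : ℕ → Sig)
    (i : ℕ) (b b' : PB A.Q) (y : ℕ × PB A.Q) :
    mcMove A w (i, PB.and b b') y ↔ (y = (i, b) ∨ y = (i, b')) := by
  rcases y with ⟨j, c⟩
  show (j = i ∧ (c = b ∨ c = b')) ↔ _
  rw [Prod.mk.injEq, Prod.mk.injEq]
  tauto

theorem mcMove_or_iff {Sig Gam : Type} (A : AltAutomaton Sig Gam) (w : ℕ → Sig)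
    (i : ℕ) (b b' : PB A.Q) (y : ℕ × PB A.Q) :
    mcMove A w (i, PB.or b b') y ↔ (y = (i, b) ∨ y = (i, b')) := by
  rcases y with ⟨j, c⟩
  show (j = i ∧ (c = b ∨ c = b')) ↔ _
  rw [Prod.mk.injEq, Prod.mk.injEq]
  tauto

theorem mcMove_fst_le {Sig Gam : Type} {A : AltAutomaton Sig Gam} {w : ℕ → Sig}
    {x y : ℕ × PB A.Q} (h : mcMove A w x y) : x.1 ≤ y.1 := by
  rcases x with ⟨i, b⟩
  cases b with
  | atom q => rw [mcMove_atom_iff] at h; subst h; simp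
  | and b b' => rcases (mcMove_and_iff A w i b b' y).1 h with rfl | rfl <;> simp
  | or b b' => rcases (mcMove_or_iff A w i b b' y).1 h with rfl | rfl <;> simp

/-- Atoms reachable by a `σ`-consistent extension ending in exactly one new atom. -/
def ReachTo {Sig Gam : Type} (A : AltAutomaton Sig Gam) (w : ℕ → Sig)
    (ev : ℕ × PB A.Q → Prop) (σ : List (ℕ × PB A.Q) → ℕ × PB A.Q)
    (m : List (ℕ × PB A.Q)) (i : ℕ) (q : A.Q) : Prop :=
  ∃ ext : List (ℕ × PB A.Q), ext ≠ [] ∧ OkHist (mcMove A w) ev σ (mI A) (m ++ ext) ∧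
    ext.getLast? = some (i, PB.atom q) ∧
    ext.filterMap (fun x => x.2.theAtom?) = [q]

/-- The target set for the simulation, mid-formula. -/
def Sfun {Sig Gam : Type} (A : AltAutomaton Sig Gam) (w : ℕ → Sig)
    (ev : ℕ × PB A.Q → Prop) (σ : List (ℕ × PB A.Q) → ℕ × PB A.Q)
    (m : List (ℕ × PB A.Q)) : A.Q → Prop := fun q =>
  ∃ i q₀, m.getLast? = some (i, PB.atom q₀) ∧ ReachTo A w ev σ m (i + 1) q

open Classical in
noncomputable def simStep {Sig Gam : Type} (A : AltAutomaton Sig Gam) (w : ℕ → Sig)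
    (ev : ℕ × PB A.Q → Prop) (σ : List (ℕ × PB A.Q) → ℕ × PB A.Q)
    (m : List (ℕ × PB A.Q)) (x : ℕ × PB A.Q) : List (ℕ × PB A.Q) :=
  match x with
  | (i, PB.atom q) => if h : ReachTo A w ev σ m i q then m ++ h.choose else m
  | _ => m

/-- The simulated history of a real history. -/
noncomputable def Msim {Sig Gam : Type} (A : AltAutomaton Sig Gam) (w : ℕ → Sig)
    (ev : ℕ × PB A.Q → Prop) (σ : List (ℕ × PB A.Q) → ℕ × PB A.Q)
    (l : List (ℕ × PB A.Q)) : List (ℕ × PB A.Q) :=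
  l.foldl (simStep A w ev σ) []

open Classical in
theorem simStep_atom {Sig Gam : Type} (A : AltAutomaton Sig Gam) (w : ℕ → Sig)
    (ev : ℕ × PB A.Q → Prop) (σ : List (ℕ × PB A.Q) → ℕ × PB A.Q)
    (m : List (ℕ × PB A.Q)) (i : ℕ) (q : A.Q) :
    simStep A w ev σ m (i, PB.atom q) =
      if h : ReachTo A w ev σ m i q then m ++ h.choose else m := rfl

theorem simStep_nonatom {Sig Gam : Type} (A : AltAutomaton Sig Gam) (w : ℕ → Sig)
    (ev : ℕ × PB A.Q → Prop) (σ : List (ℕ × PB A.Q) → ℕ × PB A.Q)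
    (m : List (ℕ × PB A.Q)) (x : ℕ × PB A.Q) (hx : x.2.theAtom? = none) :
    simStep A w ev σ m x = m := by
  rcases x with ⟨i, c⟩
  cases c with
  | atom q => simp [PB.theAtom?] at hx
  | and b b' => rfl
  | or b b' => rfl

/-- A legal strategy yields legal moves from the end of any consistent history. -/
theorem sigma_legal {Sig Gam : Type} (A : AltAutomaton Sig Gam) (w : ℕ → Sig)
    (σ : List (ℕ × PB A.Q) → ℕ × PB A.Q) (P : ℕ × PB A.Q → Prop)
    (hleg : ∀ (l : List (ℕ × PB A.Q)) (x : ℕ × PB A.Q),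
      (mcGame A w).IsHist (l ++ [x]) → P x → (mcGame A w).move x (σ (l ++ [x])))
    {ev : ℕ × PB A.Q → Prop} {m : List (ℕ × PB A.Q)} {x : ℕ × PB A.Q}
    (hok : OkHist (mcMove A w) ev σ (mI A) m)
    (hlast : m.getLast? = some x) (hx : P x) : mcMove A w x (σ m) := by
  have hne := hok.ne_nil
  have hg : m.getLast hne = x := by
    rw [List.getLast?_eq_getLast hne] at hlast
    exact Option.some.inj hlast
  have hm : m.dropLast ++ [x] = m := by
    rw [← hg]
    exact List.dropLast_append_getLast hne
  have h1 := hleg m.dropLast x (by rw [hm]; exact ⟨hok.head, hok.chain⟩) hx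
  rwa [hm] at h1

/-- Lift a reach-fact over one non-atom descent step. -/
theorem reachTo_lift {Sig Gam : Type} (A : AltAutomaton Sig Gam) (w : ℕ → Sig)
    (ev : ℕ × PB A.Q → Prop) (σ : List (ℕ × PB A.Q) → ℕ × PB A.Q)
    {m : List (ℕ × PB A.Q)} {i : ℕ} {top c : PB A.Q}
    (hok : OkHist (mcMove A w) ev σ (mI A) m) (hlast : m.getLast? = some (i, top))
    (hmv : mcMove A w (i, top) (i, c))
    (hcons : ev (i, top) → (i, c) = σ m) (q : A.Q)
    (hq : c = PB.atom q ∨ (c.theAtom? = none ∧ ReachTo A w ev σ (m ++ [(i, c)]) i q)) :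
    ReachTo A w ev σ m i q := by
  rcases hq with rfl | ⟨hnone, ⟨ext, hne, hok2, hlast2, hat2⟩⟩
  · refine ⟨[(i, PB.atom q)], by simp, ?_, by simp, by simp [PB.theAtom?]⟩
    exact hok.snoc hlast hmv hcons
  · refine ⟨(i, c) :: ext, by simp, ?_, ?_, ?_⟩
    · rw [show m ++ (i, c) :: ext = (m ++ [(i, c)]) ++ ext by simp]
      exact hok2
    · rw [show (i, c) :: ext = [(i, c)] ++ ext from rfl,
        List.getLast?_append_of_ne_nil _ hne]
      exact hlast2
    · rw [List.filterMap_cons]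
      simp only [hnone]
      exact hat2

/-- Lift a reach-fact over the atom-expansion step. -/
theorem reachTo_expand {Sig Gam : Type} (A : AltAutomaton Sig Gam) (w : ℕ → Sig)
    (ev : ℕ × PB A.Q → Prop) (σ : List (ℕ × PB A.Q) → ℕ × PB A.Q)
    {m : List (ℕ × PB A.Q)} {i : ℕ} {q₀ : A.Q}
    (hok : OkHist (mcMove A w) ev σ (mI A) m)
    (hlast : m.getLast? = some (i, PB.atom q₀))
    (hcons : ev (i, PB.atom q₀) → (i + 1, A.delta q₀ (w i)) = σ m) (q : A.Q)
    (hq : A.delta q₀ (w i) = PB.atom q ∨ ((A.delta q₀ (w i)).theAtom? = none ∧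
      ReachTo A w ev σ (m ++ [(i + 1, A.delta q₀ (w i))]) (i + 1) q)) :
    ReachTo A w ev σ m (i + 1) q := by
  have hmv : mcMove A w (i, PB.atom q₀) (i + 1, A.delta q₀ (w i)) :=
    (mcMove_atom_iff A w i q₀ _).2 rfl
  rcases hq with hat | ⟨hnone, ⟨ext, hne, hok2, hlast2, hat2⟩⟩
  · refine ⟨[(i + 1, A.delta q₀ (w i))], by simp, ?_, by simp [hat], ?_⟩
    · exact hok.snoc hlast hmv hcons
    · simp [hat, PB.theAtom?]
  · refine ⟨(i + 1, A.delta q₀ (w i)) :: ext, by simp, ?_, ?_, ?_⟩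
    · rw [show m ++ (i + 1, A.delta q₀ (w i)) :: ext =
        (m ++ [(i + 1, A.delta q₀ (w i))]) ++ ext by simp]
      exact hok2
    · rw [show (i + 1, A.delta q₀ (w i)) :: ext = [(i + 1, A.delta q₀ (w i))] ++ ext from rfl,
        List.getLast?_append_of_ne_nil _ hne]
      exact hlast2
    · rw [List.filterMap_cons]
      simp only [hnone]
      exact hat2

theorem helperEve {Sig Gam : Type} (A : AltAutomaton Sig Gam) (w : ℕ → Sig)
    (σ : List (ℕ × PB A.Q) → ℕ × PB A.Q)
    (hleg : ∀ (l : List (ℕ × PB A.Q)) (x : ℕ × PB A.Q),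
      (mcGame A w).IsHist (l ++ [x]) → (mcGame A w).eve x → (mcGame A w).move x (σ (l ++ [x])))
    (b : PB A.Q) : ∀ (m : List (ℕ × PB A.Q)) (i : ℕ),
      OkHist (mcMove A w) evE σ (mI A) m → m.getLast? = some (i, b) →
      b.sat (fun q => b = PB.atom q ∨ (b.theAtom? = none ∧ ReachTo A w evE σ m i q)) := by
  induction b with
  | atom q =>
    intro m i hok hlast
    exact Or.inl rfl
  | and b₁ b₂ ih₁ ih₂ =>
    intro m i hok hlast
    refine ⟨?_, ?_⟩
    · have hmv : mcMove A w (i, PB.and b₁ b₂) (i, b₁) :=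
        (mcMove_and_iff A w i b₁ b₂ _).2 (Or.inl rfl)
      have hok' : OkHist (mcMove A w) evE σ (mI A) (m ++ [(i, b₁)]) :=
        hok.snoc hlast hmv (fun hev => hev.elim)
      have h := ih₁ (m ++ [(i, b₁)]) i hok' List.getLast?_concat
      refine PB.sat_mono (fun q hq => Or.inr ⟨rfl, ?_⟩) h
      exact reachTo_lift A w evE σ hok hlast hmv (fun hev => hev.elim) q hq
    · have hmv : mcMove A w (i, PB.and b₁ b₂) (i, b₂) :=
        (mcMove_and_iff A w i b₁ b₂ _).2 (Or.inr rfl)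
      have hok' : OkHist (mcMove A w) evE σ (mI A) (m ++ [(i, b₂)]) :=
        hok.snoc hlast hmv (fun hev => hev.elim)
      have h := ih₂ (m ++ [(i, b₂)]) i hok' List.getLast?_concat
      refine PB.sat_mono (fun q hq => Or.inr ⟨rfl, ?_⟩) h
      exact reachTo_lift A w evE σ hok hlast hmv (fun hev => hev.elim) q hq
  | or b₁ b₂ ih₁ ih₂ =>
    intro m i hok hlast
    have hlegm : mcMove A w (i, PB.or b₁ b₂) (σ m) :=
      sigma_legal A w σ (mcGame A w).eve hleg hok hlast trivial
    rcases (mcMove_or_iff A w i b₁ b₂ (σ m)).1 hlegm with hσ | hσ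
    · refine Or.inl ?_
      have hmv : mcMove A w (i, PB.or b₁ b₂) (i, b₁) := by
        rw [mcMove_or_iff]; exact Or.inl rfl
      have hok' : OkHist (mcMove A w) evE σ (mI A) (m ++ [(i, b₁)]) :=
        hok.snoc hlast hmv (fun _ => hσ.symm)
      have h := ih₁ (m ++ [(i, b₁)]) i hok' List.getLast?_concat
      refine PB.sat_mono (fun q hq => Or.inr ⟨rfl, ?_⟩) h
      exact reachTo_lift A w evE σ hok hlast hmv (fun _ => hσ.symm) q hq
    · refine Or.inr ?_
      have hmv : mcMove A w (i, PB.or b₁ b₂) (i, b₂) := by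
        rw [mcMove_or_iff]; exact Or.inr rfl
      have hok' : OkHist (mcMove A w) evE σ (mI A) (m ++ [(i, b₂)]) :=
        hok.snoc hlast hmv (fun _ => hσ.symm)
      have h := ih₂ (m ++ [(i, b₂)]) i hok' List.getLast?_concat
      refine PB.sat_mono (fun q hq => Or.inr ⟨rfl, ?_⟩) h
      exact reachTo_lift A w evE σ hok hlast hmv (fun _ => hσ.symm) q hq

theorem satAfterExpandE {Sig Gam : Type} (A : AltAutomaton Sig Gam) (w : ℕ → Sig)
    (σ : List (ℕ × PB A.Q) → ℕ × PB A.Q)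
    (hleg : ∀ (l : List (ℕ × PB A.Q)) (x : ℕ × PB A.Q),
      (mcGame A w).IsHist (l ++ [x]) → (mcGame A w).eve x → (mcGame A w).move x (σ (l ++ [x])))
    {m : List (ℕ × PB A.Q)} {i : ℕ} {q₀ : A.Q}
    (hok : OkHist (mcMove A w) evE σ (mI A) m)
    (hlast : m.getLast? = some (i, PB.atom q₀)) :
    (A.delta q₀ (w i)).sat (fun q => ReachTo A w evE σ m (i + 1) q) := by
  have hmv : mcMove A w (i, PB.atom q₀) (i + 1, A.delta q₀ (w i)) :=
    (mcMove_atom_iff A w i q₀ _).2 rfl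
  have hok' : OkHist (mcMove A w) evE σ (mI A) (m ++ [(i + 1, A.delta q₀ (w i))]) :=
    hok.snoc hlast hmv (fun hev => hev.elim)
  have h := helperEve A w σ hleg (A.delta q₀ (w i)) (m ++ [(i + 1, A.delta q₀ (w i))])
    (i + 1) hok' List.getLast?_concat
  refine PB.sat_mono (fun q hq => ?_) h
  exact reachTo_expand A w evE σ hok hlast (fun hev => hev.elim) q hq

theorem helperAdam {Sig Gam : Type} (A : AltAutomaton Sig Gam) (w : ℕ → Sig)
    (σ : List (ℕ × PB A.Q) → ℕ × PB A.Q)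
    (hleg : ∀ (l : List (ℕ × PB A.Q)) (x : ℕ × PB A.Q),
      (mcGame A w).IsHist (l ++ [x]) → ¬ (mcGame A w).eve x → (mcGame A w).move x (σ (l ++ [x])))
    (b : PB A.Q) : ∀ (m : List (ℕ × PB A.Q)) (i : ℕ),
      OkHist (mcMove A w) evA σ (mI A) m → m.getLast? = some (i, b) →
      ∀ v : A.Q → Prop, b.sat v →
      ∃ q, v q ∧ (b = PB.atom q ∨ (b.theAtom? = none ∧ ReachTo A w evA σ m i q)) := by
  induction b with
  | atom q =>
    intro m i hok hlast v hv
    exact ⟨q, hv, Or.inl rfl⟩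
  | and b₁ b₂ ih₁ ih₂ =>
    intro m i hok hlast v hv
    have hlegm : mcMove A w (i, PB.and b₁ b₂) (σ m) :=
      sigma_legal A w σ (fun x => ¬ (mcGame A w).eve x) hleg hok hlast (fun h => h)
    rcases (mcMove_and_iff A w i b₁ b₂ (σ m)).1 hlegm with hσ | hσ
    · have hmv : mcMove A w (i, PB.and b₁ b₂) (i, b₁) := by
        rw [mcMove_and_iff]; exact Or.inl rfl
      have hok' : OkHist (mcMove A w) evA σ (mI A) (m ++ [(i, b₁)]) :=
        hok.snoc hlast hmv (fun _ => hσ.symm)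
      obtain ⟨q, hvq, hq⟩ := ih₁ (m ++ [(i, b₁)]) i hok' List.getLast?_concat v hv.1
      exact ⟨q, hvq, Or.inr ⟨rfl,
        reachTo_lift A w evA σ hok hlast hmv (fun _ => hσ.symm) q hq⟩⟩
    · have hmv : mcMove A w (i, PB.and b₁ b₂) (i, b₂) := by
        rw [mcMove_and_iff]; exact Or.inr rfl
      have hok' : OkHist (mcMove A w) evA σ (mI A) (m ++ [(i, b₂)]) :=
        hok.snoc hlast hmv (fun _ => hσ.symm)
      obtain ⟨q, hvq, hq⟩ := ih₂ (m ++ [(i, b₂)]) i hok' List.getLast?_concat v hv.2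
      exact ⟨q, hvq, Or.inr ⟨rfl,
        reachTo_lift A w evA σ hok hlast hmv (fun _ => hσ.symm) q hq⟩⟩
  | or b₁ b₂ ih₁ ih₂ =>
    intro m i hok hlast v hv
    rcases hv with hv | hv
    · have hmv : mcMove A w (i, PB.or b₁ b₂) (i, b₁) := by
        rw [mcMove_or_iff]; exact Or.inl rfl
      have hok' : OkHist (mcMove A w) evA σ (mI A) (m ++ [(i, b₁)]) :=
        hok.snoc hlast hmv (fun h => absurd trivial h)
      obtain ⟨q, hvq, hq⟩ := ih₁ (m ++ [(i, b₁)]) i hok' List.getLast?_concat v hv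
      exact ⟨q, hvq, Or.inr ⟨rfl,
        reachTo_lift A w evA σ hok hlast hmv (fun h => absurd trivial h) q hq⟩⟩
    · have hmv : mcMove A w (i, PB.or b₁ b₂) (i, b₂) := by
        rw [mcMove_or_iff]; exact Or.inr rfl
      have hok' : OkHist (mcMove A w) evA σ (mI A) (m ++ [(i, b₂)]) :=
        hok.snoc hlast hmv (fun h => absurd trivial h)
      obtain ⟨q, hvq, hq⟩ := ih₂ (m ++ [(i, b₂)]) i hok' List.getLast?_concat v hv
      exact ⟨q, hvq, Or.inr ⟨rfl,
        reachTo_lift A w evA σ hok hlast hmv (fun h => absurd trivial h) q hq⟩⟩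

theorem satAfterExpandA {Sig Gam : Type} (A : AltAutomaton Sig Gam) (w : ℕ → Sig)
    (σ : List (ℕ × PB A.Q) → ℕ × PB A.Q)
    (hleg : ∀ (l : List (ℕ × PB A.Q)) (x : ℕ × PB A.Q),
      (mcGame A w).IsHist (l ++ [x]) → ¬ (mcGame A w).eve x → (mcGame A w).move x (σ (l ++ [x])))
    {m : List (ℕ × PB A.Q)} {i : ℕ} {q₀ : A.Q}
    (hok : OkHist (mcMove A w) evA σ (mI A) m)
    (hlast : m.getLast? = some (i, PB.atom q₀)) :
    ∀ v : A.Q → Prop, (A.delta q₀ (w i)).sat v →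
      ∃ q, v q ∧ ReachTo A w evA σ m (i + 1) q := by
  intro v hv
  have hσm : σ m = (i + 1, A.delta q₀ (w i)) := by
    have hlegm : mcMove A w (i, PB.atom q₀) (σ m) :=
      sigma_legal A w σ (fun x => ¬ (mcGame A w).eve x) hleg hok hlast (fun h => h)
    exact (mcMove_atom_iff A w i q₀ (σ m)).1 hlegm
  have hcons : evA ((i, PB.atom q₀) : ℕ × PB A.Q) → ((i + 1, A.delta q₀ (w i)) : ℕ × PB A.Q) = σ m :=
    fun _ => hσm.symm
  have hmv : mcMove A w (i, PB.atom q₀) (i + 1, A.delta q₀ (w i)) :=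
    (mcMove_atom_iff A w i q₀ _).2 rfl
  have hok' : OkHist (mcMove A w) evA σ (mI A) (m ++ [(i + 1, A.delta q₀ (w i))]) :=
    hok.snoc hlast hmv hcons
  obtain ⟨q, hvq, hq⟩ := helperAdam A w σ hleg (A.delta q₀ (w i))
    (m ++ [(i + 1, A.delta q₀ (w i))]) (i + 1) hok' List.getLast?_concat v hv
  exact ⟨q, hvq, reachTo_expand A w evA σ hok hlast hcons q hq⟩

theorem histOf_succ {Pos : Type} (p : ℕ → Pos) (n : ℕ) :
    Game.histOf p (n + 1) = Game.histOf p n ++ [p (n + 1)] := by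
  unfold Game.histOf
  rw [List.range_succ, List.map_append]
  rfl

theorem histOf_getLast? {Pos : Type} (p : ℕ → Pos) (n : ℕ) :
    (Game.histOf p n).getLast? = some (p n) := by
  unfold Game.histOf
  rw [List.range_succ, List.map_append]
  exact List.getLast?_concat

theorem histOf_getElem {Pos : Type} (p : ℕ → Pos) (n j : ℕ)
    (hj : j < (Game.histOf p n).length) : (Game.histOf p n)[j]'hj = p j := by
  unfold Game.histOf at *
  simp

theorem isHist_histOf {Pos : Type} {G : Game Pos} {p : ℕ → Pos} (hp : G.IsPlay p) (n : ℕ) :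
    G.IsHist (Game.histOf p n) := by
  constructor
  · unfold Game.histOf
    rw [List.range_succ_eq_map]
    simp [hp.1]
  · refine List.isChain_iff_getElem.2 ?_
    intro i hi
    have h1 : i < (Game.histOf p n).length := by omega
    have h2 : i + 1 < (Game.histOf p n).length := by
      simp only [Game.histOf, List.length_map, List.length_range] at hi ⊢
      omega
    rw [histOf_getElem p n i h1, histOf_getElem p n (i + 1) h2]
    exact hp.2 i

theorem PB.theAtom?_some {Q : Type} {b : PB Q} {q : Q} (h : b.theAtom? = some q) :
    b = PB.atom q := by
  cases b <;> simp [PB.theAtom?] at h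
  rw [h]

/-- Size of a formula. -/
def PB.psize {Q : Type} : PB Q → ℕ
  | PB.atom _ => 1
  | PB.and b b' => b.psize + b'.psize + 1
  | PB.or b b' => b.psize + b'.psize + 1

theorem mcMove_psize_lt {Sig Gam : Type} {A : AltAutomaton Sig Gam} {w : ℕ → Sig}
    {i : ℕ} {b : PB A.Q} (hb : b.theAtom? = none) {y : ℕ × PB A.Q}
    (h : mcMove A w (i, b) y) : y.2.psize < b.psize := by
  cases b with
  | atom q => simp [PB.theAtom?] at hb
  | and b₁ b₂ =>
    rcases (mcMove_and_iff A w i b₁ b₂ y).1 h with rfl | rfl <;> simp [PB.psize] <;> omega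
  | or b₁ b₂ =>
    rcases (mcMove_or_iff A w i b₁ b₂ y).1 h with rfl | rfl <;> simp [PB.psize] <;> omega

theorem atoms_infinite {Sig Gam : Type} (A : AltAutomaton Sig Gam) (w : ℕ → Sig)
    (p : ℕ → ℕ × PB A.Q) (hp : ∀ n, mcMove A w (p n) (p (n + 1))) :
    ∀ N, ∃ k, N ≤ k ∧ ((p k).2.theAtom?).isSome := by
  intro N
  by_contra hcon
  push_neg at hcon
  have hnone : ∀ k, N ≤ k → (p k).2.theAtom? = none := by
    intro k hk
    have := hcon k hk
    exact Option.not_isSome_iff_eq_none.1 (by simpa using this)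
  set f : ℕ → ℕ := fun j => (p (N + j)).2.psize with hf
  have hd : ∀ j, f (j + 1) < f j := by
    intro j
    have h1 := hp (N + j)
    have h2 : p (N + j) = ((p (N + j)).1, (p (N + j)).2) := rfl
    rw [h2] at h1
    have h3 := mcMove_psize_lt (hnone (N + j) (by omega)) h1
    rw [hf]
    simp only
    rw [show N + (j + 1) = N + j + 1 by omega]
    exact h3
  have hk : ∀ j, f j + j ≤ f 0 := by
    intro j
    induction j with
    | zero => omega
    | succ j ih =>
      have := hd j
      omega
  have h1 := hk (f 0 + 1)
  have h2 : 1 ≤ f (f 0 + 1) := by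
    rw [hf]
    simp only
    cases hpp : (p (N + (f 0 + 1))).2 <;> simp [PB.psize]
  omega

theorem FL_len_succ_some {X Y : Type} {sel : X → Option Y} {x : ℕ → X} {k : ℕ}
    (h : (sel (x k)).isSome) :
    (FL sel x (k + 1)).length = (FL sel x k).length + 1 := by
  rw [FL_succ]
  cases hs : sel (x k)
  · rw [hs] at h; simp at h
  · simp

theorem FL_unbounded_of_atoms {X Y : Type} (sel : X → Option Y) (p : ℕ → X)
    (hatoms : ∀ N, ∃ k, N ≤ k ∧ (sel (p k)).isSome) :
    ∀ c, ∃ n, c < (FL sel p (n + 1)).length := by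
  intro c
  induction c with
  | zero =>
    obtain ⟨k, _, hk⟩ := hatoms 0
    exact ⟨k, by rw [FL_len_succ_some hk]; omega⟩
  | succ c ih =>
    obtain ⟨n, hn⟩ := ih
    obtain ⟨k, hk, hks⟩ := hatoms (n + 1)
    refine ⟨k, ?_⟩
    have h1 := (FL_prefix sel p (show n + 1 ≤ k from hk)).length_le
    rw [FL_len_succ_some hks]
    omega

theorem mainE {Sig Gam : Type} (A : AltAutomaton Sig Gam) (d' : A.Q → Sig → PB A.Q)
    (hq : ∀ q a, (A.delta q a).Equiv (d' q a)) (w : ℕ → Sig)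
    (σ σ'' : List (ℕ × PB A.Q) → ℕ × PB A.Q)
    (hw : (mcGame A w).WinsEve σ)
    (hleg'' : ∀ (l : List (ℕ × PB A.Q)) (x : ℕ × PB A.Q),
      (mcGame (reD A d') w).IsHist (l ++ [x]) → (mcGame (reD A d') w).eve x →
      (mcGame (reD A d') w).move x (σ'' (l ++ [x])))
    (hb : ∀ (l : List (ℕ × PB A.Q)) (i : ℕ) (c₁ c₂ : PB A.Q) (j : ℕ) (q₀ : A.Q),
      (mcGame (reD A d') w).IsHist l → l.getLast? = some (i, PB.or c₁ c₂) →
      (Msim A w evE σ l).getLast? = some (j, PB.atom q₀) → i = j + 1 →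
      (c₁.sat (Sfun A w evE σ (Msim A w evE σ l)) → σ'' l = (i, c₁)) ∧
      (¬ c₁.sat (Sfun A w evE σ (Msim A w evE σ l)) → σ'' l = (i, c₂))) :
    (mcGame (reD A d') w).WinsEve σ'' := by
  classical
  refine ⟨hleg'', ?_⟩
  intro p hp hag
  have hsel : ∀ x : ℕ × PB A.Q, (fun x : ℕ × PB A.Q => x.2.theAtom?) x = x.2.theAtom? :=
    fun _ => rfl
  set sel : ℕ × PB A.Q → Option A.Q := fun x => x.2.theAtom? with hseldef
  set M : ℕ → List (ℕ × PB A.Q) := fun n => Msim A w evE σ (Game.histOf p n) with hM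
  have hMsucc : ∀ n, M (n + 1) = simStep A w evE σ (M n) (p (n + 1)) := by
    intro n
    show Msim A w evE σ (Game.histOf p (n + 1)) = _
    exact (congrArg (Msim A w evE σ) (histOf_succ p n)).trans (List.foldl_append ..)
  have hp0 : p 0 = (0, PB.atom A.init) := hp.1
  have hM0eq : M 0 = simStep A w evE σ [] (p 0) := rfl
  -- the atom-extension step
  have hAtomStep : ∀ (n : ℕ) (i₂ : ℕ) (q₂ : A.Q), p (n + 1) = (i₂, PB.atom q₂) →
      ReachTo A w evE σ (M n) i₂ q₂ →
      (M n).filterMap sel = FL sel p (n + 1) →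
      OkHist (mcMove A w) evE σ (mI A) (M (n + 1)) ∧
        (M (n + 1)).filterMap sel = FL sel p (n + 1 + 1) ∧
        (M (n + 1)).getLast? = some (i₂, PB.atom q₂) := by
    intro n i₂ q₂ hpn hre hat
    have hM1 : M (n + 1) = M n ++ hre.choose := by
      rw [hMsucc n, hpn, simStep_atom, dif_pos hre]
    obtain ⟨hne0, hok0, hlast0, hat0⟩ := hre.choose_spec
    have hFL2 : FL sel p (n + 1 + 1) = FL sel p (n + 1) ++ [q₂] := by
      rw [FL_succ sel p (n + 1), hpn]
      rfl
    refine ⟨by rw [hM1]; exact hok0, ?_, ?_⟩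
    · rw [hM1, List.filterMap_append, hat, hat0, hFL2]
    · rw [hM1, List.getLast?_append_of_ne_nil _ hne0]
      exact hlast0
  -- the invariant
  have key : ∀ n, OkHist (mcMove A w) evE σ (mI A) (M n) ∧
      (M n).filterMap sel = FL sel p (n + 1) ∧
      ((∃ i q, p n = (i, PB.atom q) ∧ (M n).getLast? = some (i, PB.atom q)) ∨
       (∃ i q₀ c, p n = (i + 1, c) ∧ c.theAtom? = none ∧
         (M n).getLast? = some (i, PB.atom q₀) ∧ c.sat (Sfun A w evE σ (M n)))) := by
    intro n
    induction n with
    | zero =>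
      have hcond : ReachTo A w evE σ [] 0 A.init := by
        refine ⟨[(0, PB.atom A.init)], by simp, ?_, by simp, by simp [PB.theAtom?]⟩
        simpa [mI] using okHist_singleton (mcMove A w) evE σ (mI A)
      have hM0 : M 0 = hcond.choose := by
        rw [hM0eq, hp0, simStep_atom, dif_pos hcond, List.nil_append]
      obtain ⟨hne0, hok0, hlast0, hat0⟩ := hcond.choose_spec
      rw [List.nil_append] at hok0
      have hFL1 : FL sel p 1 = [A.init] := by
        rw [show (1 : ℕ) = 0 + 1 from rfl, FL_succ sel p 0, hp0]
        rfl
      refine ⟨by rw [hM0]; exact hok0, ?_, Or.inl ⟨0, A.init, hp0, ?_⟩⟩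
      · rw [hM0, hat0, hFL1]
      · rw [hM0]
        exact hlast0
    | succ n ih =>
      obtain ⟨hok, hat, hbr⟩ := ih
      have hmv : mcMove (reD A d') w (p n) (p (n + 1)) := hp.2 n
      -- common ending
      have hfinish : ∀ (j : ℕ) (qs : A.Q) (cc : PB A.Q),
          (M n).getLast? = some (j, PB.atom qs) → p (n + 1) = (j + 1, cc) →
          cc.sat (Sfun A w evE σ (M n)) →
          OkHist (mcMove A w) evE σ (mI A) (M (n + 1)) ∧
          (M (n + 1)).filterMap sel = FL sel p (n + 1 + 1) ∧
          ((∃ i q, p (n + 1) = (i, PB.atom q) ∧ (M (n + 1)).getLast? = some (i, PB.atom q)) ∨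
           (∃ i q₀ c, p (n + 1) = (i + 1, c) ∧ c.theAtom? = none ∧
             (M (n + 1)).getLast? = some (i, PB.atom q₀) ∧
             c.sat (Sfun A w evE σ (M (n + 1))))) := by
        intro j qs cc hlast hpn1 hsatcc
        cases hcc : cc.theAtom? with
        | some q₂ =>
          have hccat : cc = PB.atom q₂ := PB.theAtom?_some hcc
          subst hccat
          have hS : Sfun A w evE σ (M n) q₂ := hsatcc
          obtain ⟨i', q₀', hl', hre'⟩ := hS
          rw [hlast] at hl'
          have hinj := Option.some.inj hl'
          have hi' : j = i' := congrArg Prod.fst hinj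
          subst hi'
          obtain ⟨hok1, hat1, hlast1⟩ := hAtomStep n (j + 1) q₂ hpn1 hre' hat
          exact ⟨hok1, hat1, Or.inl ⟨j + 1, q₂, hpn1, hlast1⟩⟩
        | none =>
          have hM1 : M (n + 1) = M n := by
            rw [hMsucc n, hpn1]
            exact simStep_nonatom A w evE σ (M n) (j + 1, cc) hcc
          have hFL2 : FL sel p (n + 1 + 1) = FL sel p (n + 1) := by
            rw [FL_succ sel p (n + 1), hpn1]
            have hsn : sel (j + 1, cc) = none := hcc
            rw [hsn]
            simp
          refine ⟨by rw [hM1]; exact hok, ?_, Or.inr ⟨j, qs, cc, hpn1, hcc,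
            by rw [hM1]; exact hlast, by rw [hM1]; exact hsatcc⟩⟩
          rw [hM1, hat, hFL2]
      rcases hbr with ⟨i, qa, hpn, hlastM⟩ | ⟨i, q₀, c, hpn, hcnone, hlastM, hsat⟩
      · -- p n is an atom position
        rw [hpn] at hmv
        have hmv' : p (n + 1) = (i + 1, d' qa (w i)) :=
          (mcMove_atom_iff (reD A d') w i qa (p (n + 1))).1 hmv
        have hsatE := satAfterExpandE A w σ hw.1 hok hlastM
        have hsatS : (d' qa (w i)).sat (Sfun A w evE σ (M n)) := by
          have h2 := (hq qa (w i) _).1 hsatE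
          exact PB.sat_mono (fun q hq2 => ⟨i, qa, hlastM, hq2⟩) h2
        exact hfinish i qa (d' qa (w i)) hlastM hmv' hsatS
      · -- p n is mid-formula
        have hsat2 : c.sat (Sfun A w evE σ (M n)) := hsat
        cases hc : c with
        | atom q => rw [hc] at hcnone; simp [PB.theAtom?] at hcnone
        | or c₁ c₂ =>
          subst hc
          have hev : (mcGame (reD A d') w).eve (p n) := by
            rw [hpn]; trivial
          have hσ'' : p (n + 1) = σ'' (Game.histOf p n) := hag n hev
          have hlastH : (Game.histOf p n).getLast? = some (i + 1, PB.or c₁ c₂) := by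
            rw [histOf_getLast?, hpn]
          have hbn := hb (Game.histOf p n) (i + 1) c₁ c₂ i q₀ (isHist_histOf hp n)
            hlastH hlastM rfl
          have hMn : Msim A w evE σ (Game.histOf p n) = M n := (congrFun hM n).symm
          rw [hMn] at hbn
          have hsator : c₁.sat (Sfun A w evE σ (M n)) ∨ c₂.sat (Sfun A w evE σ (M n)) := hsat
          by_cases hx : c₁.sat (Sfun A w evE σ (M n))
          · exact hfinish i q₀ c₁ hlastM (by rw [hσ'', hbn.1 hx]) hx
          · exact hfinish i q₀ c₂ hlastM (by rw [hσ'', hbn.2 hx])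
              (hsator.resolve_left hx)
        | and c₁ c₂ =>
          subst hc
          rw [hpn] at hmv
          rcases (mcMove_and_iff (reD A d') w (i + 1) c₁ c₂ (p (n + 1))).1 hmv with h1 | h1
          · exact hfinish i q₀ c₁ hlastM h1 hsat2.1
          · exact hfinish i q₀ c₂ hlastM h1 hsat2.2
  -- assemble
  have hpre : ∀ n, M n <+: M (n + 1) := by
    intro n
    rw [hMsucc n]
    rcases hpp : p (n + 1) with ⟨i, b⟩
    cases b with
    | atom q =>
      show M n <+: (if h : ReachTo A w evE σ (M n) i q then M n ++ h.choose else M n)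
      by_cases hre : ReachTo A w evE σ (M n) i q
      · rw [dif_pos hre]; exact ⟨_, rfl⟩
      · rw [dif_neg hre]
    | and b₁ b₂ => exact List.prefix_rfl
    | or b₁ b₂ => exact List.prefix_rfl
  have hatoms := atoms_infinite (reD A d') w p hp.2
  have hcnt : ∀ c, ∃ n, c < (FL sel p (n + 1)).length :=
    FL_unbounded_of_atoms sel p (fun N => hatoms N)
  have hlen : ∀ k, ∃ n, k < (M n).length := by
    intro k
    obtain ⟨n, hn⟩ := hcnt k
    refine ⟨n, ?_⟩
    rw [← (key n).2.1] at hn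
    have := List.length_filterMap_le sel (M n)
    omega
  obtain ⟨pt, hpt0, hptmv, hptag, hptsub⟩ := playLift (mcMove A w) evE σ (mI A) sel p M
    (fun n => (key n).1) hpre (fun n => (key n).2.1) hlen hcnt
  intro ρ hρ
  have hwin := hw.2 pt ⟨hpt0, hptmv⟩ (fun k hev => hptag k (by
    rw [mcGame_eve_eq] at hev; exact hev))
  exact hwin ρ ((hptsub ρ).1 hρ)

theorem mainA {Sig Gam : Type} (A : AltAutomaton Sig Gam) (d' : A.Q → Sig → PB A.Q)
    (hq : ∀ q a, (A.delta q a).Equiv (d' q a)) (w : ℕ → Sig)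
    (σ σ'' : List (ℕ × PB A.Q) → ℕ × PB A.Q)
    (hw : (mcGame A w).WinsAdam σ)
    (hleg'' : ∀ (l : List (ℕ × PB A.Q)) (x : ℕ × PB A.Q),
      (mcGame (reD A d') w).IsHist (l ++ [x]) → ¬ (mcGame (reD A d') w).eve x →
      (mcGame (reD A d') w).move x (σ'' (l ++ [x])))
    (hb : ∀ (l : List (ℕ × PB A.Q)) (i : ℕ) (c₁ c₂ : PB A.Q) (j : ℕ) (q₀ : A.Q),
      (mcGame (reD A d') w).IsHist l → l.getLast? = some (i, PB.and c₁ c₂) →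
      (Msim A w evA σ l).getLast? = some (j, PB.atom q₀) → i = j + 1 →
      (c₁.sat (fun q => ¬ Sfun A w evA σ (Msim A w evA σ l) q) → σ'' l = (i, c₂)) ∧
      (¬ c₁.sat (fun q => ¬ Sfun A w evA σ (Msim A w evA σ l) q) → σ'' l = (i, c₁))) :
    (mcGame (reD A d') w).WinsAdam σ'' := by
  classical
  refine ⟨hleg'', ?_⟩
  intro p hp hag
  set sel : ℕ × PB A.Q → Option A.Q := fun x => x.2.theAtom? with hseldef
  set M : ℕ → List (ℕ × PB A.Q) := fun n => Msim A w evA σ (Game.histOf p n) with hM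
  have hMsucc : ∀ n, M (n + 1) = simStep A w evA σ (M n) (p (n + 1)) := by
    intro n
    show Msim A w evA σ (Game.histOf p (n + 1)) = _
    exact (congrArg (Msim A w evA σ) (histOf_succ p n)).trans (List.foldl_append ..)
  have hp0 : p 0 = (0, PB.atom A.init) := hp.1
  have hM0eq : M 0 = simStep A w evA σ [] (p 0) := rfl
  have hAtomStep : ∀ (n : ℕ) (i₂ : ℕ) (q₂ : A.Q), p (n + 1) = (i₂, PB.atom q₂) →
      ReachTo A w evA σ (M n) i₂ q₂ →
      (M n).filterMap sel = FL sel p (n + 1) →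
      OkHist (mcMove A w) evA σ (mI A) (M (n + 1)) ∧
        (M (n + 1)).filterMap sel = FL sel p (n + 1 + 1) ∧
        (M (n + 1)).getLast? = some (i₂, PB.atom q₂) := by
    intro n i₂ q₂ hpn hre hat
    have hM1 : M (n + 1) = M n ++ hre.choose := by
      rw [hMsucc n, hpn, simStep_atom, dif_pos hre]
    obtain ⟨hne0, hok0, hlast0, hat0⟩ := hre.choose_spec
    have hFL2 : FL sel p (n + 1 + 1) = FL sel p (n + 1) ++ [q₂] := by
      rw [FL_succ sel p (n + 1), hpn]
      rfl
    refine ⟨by rw [hM1]; exact hok0, ?_, ?_⟩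
    · rw [hM1, List.filterMap_append, hat, hat0, hFL2]
    · rw [hM1, List.getLast?_append_of_ne_nil _ hne0]
      exact hlast0
  have key : ∀ n, OkHist (mcMove A w) evA σ (mI A) (M n) ∧
      (M n).filterMap sel = FL sel p (n + 1) ∧
      ((∃ i q, p n = (i, PB.atom q) ∧ (M n).getLast? = some (i, PB.atom q)) ∨
       (∃ i q₀ c, p n = (i + 1, c) ∧ c.theAtom? = none ∧
         (M n).getLast? = some (i, PB.atom q₀) ∧
         ¬ c.sat (fun q => ¬ Sfun A w evA σ (M n) q))) := by
    intro n
    induction n with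
    | zero =>
      have hcond : ReachTo A w evA σ [] 0 A.init := by
        refine ⟨[(0, PB.atom A.init)], by simp, ?_, by simp, by simp [PB.theAtom?]⟩
        simpa [mI] using okHist_singleton (mcMove A w) evA σ (mI A)
      have hM0 : M 0 = hcond.choose := by
        rw [hM0eq, hp0, simStep_atom, dif_pos hcond, List.nil_append]
      obtain ⟨hne0, hok0, hlast0, hat0⟩ := hcond.choose_spec
      rw [List.nil_append] at hok0
      have hFL1 : FL sel p 1 = [A.init] := by
        rw [show (1 : ℕ) = 0 + 1 from rfl, FL_succ sel p 0, hp0]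
        rfl
      refine ⟨by rw [hM0]; exact hok0, ?_, Or.inl ⟨0, A.init, hp0, ?_⟩⟩
      · rw [hM0, hat0, hFL1]
      · rw [hM0]
        exact hlast0
    | succ n ih =>
      obtain ⟨hok, hat, hbr⟩ := ih
      have hmv : mcMove (reD A d') w (p n) (p (n + 1)) := hp.2 n
      have hfinish : ∀ (j : ℕ) (qs : A.Q) (cc : PB A.Q),
          (M n).getLast? = some (j, PB.atom qs) → p (n + 1) = (j + 1, cc) →
          ¬ cc.sat (fun q => ¬ Sfun A w evA σ (M n) q) →
          OkHist (mcMove A w) evA σ (mI A) (M (n + 1)) ∧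
          (M (n + 1)).filterMap sel = FL sel p (n + 1 + 1) ∧
          ((∃ i q, p (n + 1) = (i, PB.atom q) ∧ (M (n + 1)).getLast? = some (i, PB.atom q)) ∨
           (∃ i q₀ c, p (n + 1) = (i + 1, c) ∧ c.theAtom? = none ∧
             (M (n + 1)).getLast? = some (i, PB.atom q₀) ∧
             ¬ c.sat (fun q => ¬ Sfun A w evA σ (M (n + 1)) q))) := by
        intro j qs cc hlast hpn1 hsatcc
        cases hcc : cc.theAtom? with
        | some q₂ =>
          have hccat : cc = PB.atom q₂ := PB.theAtom?_some hcc
          subst hccat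
          have hS : Sfun A w evA σ (M n) q₂ := by
            by_contra hS
            exact hsatcc hS
          obtain ⟨i', q₀', hl', hre'⟩ := hS
          rw [hlast] at hl'
          have hinj := Option.some.inj hl'
          have hi' : j = i' := congrArg Prod.fst hinj
          subst hi'
          obtain ⟨hok1, hat1, hlast1⟩ := hAtomStep n (j + 1) q₂ hpn1 hre' hat
          exact ⟨hok1, hat1, Or.inl ⟨j + 1, q₂, hpn1, hlast1⟩⟩
        | none =>
          have hM1 : M (n + 1) = M n := by
            rw [hMsucc n, hpn1]
            exact simStep_nonatom A w evA σ (M n) (j + 1, cc) hcc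
          have hFL2 : FL sel p (n + 1 + 1) = FL sel p (n + 1) := by
            rw [FL_succ sel p (n + 1), hpn1]
            have hsn : sel (j + 1, cc) = none := hcc
            rw [hsn]
            simp
          refine ⟨by rw [hM1]; exact hok, ?_, Or.inr ⟨j, qs, cc, hpn1, hcc,
            by rw [hM1]; exact hlast, by rw [hM1]; exact hsatcc⟩⟩
          rw [hM1, hat, hFL2]
      rcases hbr with ⟨i, qa, hpn, hlastM⟩ | ⟨i, q₀, c, hpn, hcnone, hlastM, hsat⟩
      · rw [hpn] at hmv
        have hmv' : p (n + 1) = (i + 1, d' qa (w i)) :=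
          (mcMove_atom_iff (reD A d') w i qa (p (n + 1))).1 hmv
        have hsatS : ¬ (d' qa (w i)).sat (fun q => ¬ Sfun A w evA σ (M n) q) := by
          intro hs
          have h2 := (hq qa (w i) _).2 hs
          obtain ⟨q, hnq, hre⟩ := satAfterExpandA A w σ hw.1 hok hlastM _ h2
          exact hnq ⟨i, qa, hlastM, hre⟩
        exact hfinish i qa (d' qa (w i)) hlastM hmv' hsatS
      · have hsat2 : ¬ c.sat (fun q => ¬ Sfun A w evA σ (M n) q) := hsat
        cases hc : c with
        | atom q => rw [hc] at hcnone; simp [PB.theAtom?] at hcnone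
        | and c₁ c₂ =>
          subst hc
          have hev : ¬ (mcGame (reD A d') w).eve (p n) := by
            rw [hpn]; exact fun h => h
          have hσ'' : p (n + 1) = σ'' (Game.histOf p n) := hag n hev
          have hlastH : (Game.histOf p n).getLast? = some (i + 1, PB.and c₁ c₂) := by
            rw [histOf_getLast?, hpn]
          have hbn := hb (Game.histOf p n) (i + 1) c₁ c₂ i q₀ (isHist_histOf hp n)
            hlastH hlastM rfl
          have hMn : Msim A w evA σ (Game.histOf p n) = M n := (congrFun hM n).symm
          rw [hMn] at hbn
          by_cases hx : c₁.sat (fun q => ¬ Sfun A w evA σ (M n) q)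
          · refine hfinish i q₀ c₂ hlastM (by rw [hσ'', hbn.1 hx]) ?_
            intro h2
            exact hsat2 ⟨hx, h2⟩
          · exact hfinish i q₀ c₁ hlastM (by rw [hσ'', hbn.2 hx]) hx
        | or c₁ c₂ =>
          subst hc
          rw [hpn] at hmv
          have hnboth : ¬ c₁.sat (fun q => ¬ Sfun A w evA σ (M n) q) ∧
              ¬ c₂.sat (fun q => ¬ Sfun A w evA σ (M n) q) := by
            constructor <;> intro h2
            · exact hsat2 (Or.inl h2)
            · exact hsat2 (Or.inr h2)
          rcases (mcMove_or_iff (reD A d') w (i + 1) c₁ c₂ (p (n + 1))).1 hmv with h1 | h1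
          · exact hfinish i q₀ c₁ hlastM h1 hnboth.1
          · exact hfinish i q₀ c₂ hlastM h1 hnboth.2
  have hpre : ∀ n, M n <+: M (n + 1) := by
    intro n
    rw [hMsucc n]
    rcases hpp : p (n + 1) with ⟨i, b⟩
    cases b with
    | atom q =>
      show M n <+: (if h : ReachTo A w evA σ (M n) i q then M n ++ h.choose else M n)
      by_cases hre : ReachTo A w evA σ (M n) i q
      · rw [dif_pos hre]; exact ⟨_, rfl⟩
      · rw [dif_neg hre]
    | and b₁ b₂ => exact List.prefix_rfl
    | or b₁ b₂ => exact List.prefix_rfl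
  have hatoms := atoms_infinite (reD A d') w p hp.2
  have hcnt : ∀ c, ∃ n, c < (FL sel p (n + 1)).length :=
    FL_unbounded_of_atoms sel p (fun N => hatoms N)
  have hlen : ∀ k, ∃ n, k < (M n).length := by
    intro k
    obtain ⟨n, hn⟩ := hcnt k
    refine ⟨n, ?_⟩
    rw [← (key n).2.1] at hn
    have := List.length_filterMap_le sel (M n)
    omega
  obtain ⟨pt, hpt0, hptmv, hptag, hptsub⟩ := playLift (mcMove A w) evA σ (mI A) sel p M
    (fun n => (key n).1) hpre (fun n => (key n).2.1) hlen hcnt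
  have hnw : ¬ (mcGame A w).win pt := hw.2 pt ⟨hpt0, hptmv⟩ (fun k hev => hptag k (by
    rw [mcGame_eve_eq] at hev; exact hev))
  have hnw2 : ¬ ∀ ρ : ℕ → A.Q, IsSubseqOn (fun x : ℕ × PB A.Q => x.2.theAtom?) pt ρ →
      (fun n => A.label (ρ n)) ∈ A.W := hnw
  push_neg at hnw2
  obtain ⟨ρ, hρsub, hρW⟩ := hnw2
  intro hwinp
  exact hρW (hwinp ρ ((hptsub ρ).2 hρsub))

open Classical in
noncomputable def sigPlainE {Sig Gam : Type} (A : AltAutomaton Sig Gam)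
    (d' : A.Q → Sig → PB A.Q) (w : ℕ → Sig)
    (σ : List (ℕ × PB A.Q) → ℕ × PB A.Q) :
    List (ℕ × PB A.Q) → ℕ × PB A.Q := fun l =>
  match l.getLast?.getD (0, PB.atom A.init) with
  | (i, PB.atom q) => (i + 1, d' q (w i))
  | (i, PB.and c₁ _) => (i, c₁)
  | (i, PB.or c₁ c₂) =>
      (i, if c₁.sat (Sfun A w evE σ (Msim A w evE σ l)) then c₁ else c₂)

open Classical in
theorem sigPlainE_or {Sig Gam : Type} (A : AltAutomaton Sig Gam)
    (d' : A.Q → Sig → PB A.Q) (w : ℕ → Sig)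
    (σ : List (ℕ × PB A.Q) → ℕ × PB A.Q) (l : List (ℕ × PB A.Q)) (i : ℕ)
    (c₁ c₂ : PB A.Q)
    (e : l.getLast?.getD (0, PB.atom A.init) = (i, PB.or c₁ c₂)) :
    sigPlainE A d' w σ l =
      (i, if c₁.sat (Sfun A w evE σ (Msim A w evE σ l)) then c₁ else c₂) := by
  unfold sigPlainE
  rw [e]

theorem evewins_transfer {Sig Gam : Type} (A : AltAutomaton Sig Gam)
    (d' : A.Q → Sig → PB A.Q) (hq : ∀ q a, (A.delta q a).Equiv (d' q a)) (w : ℕ → Sig) :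
    (mcGame A w).EveWins → (mcGame (reD A d') w).EveWins := by
  rintro ⟨σ, hσ⟩
  refine ⟨sigPlainE A d' w σ, mainE A d' hq w σ _ hσ ?_ ?_⟩
  · intro l x hish hev
    rcases x with ⟨i, b⟩
    cases b with
    | atom q => exact hev.elim
    | and c₁ c₂ => exact hev.elim
    | or c₁ c₂ =>
      have e : (l ++ [(i, PB.or c₁ c₂)]).getLast?.getD (0, PB.atom A.init) =
          (i, PB.or c₁ c₂) := by
        rw [List.getLast?_concat]
        rfl
      show mcMove (reD A d') w (i, PB.or c₁ c₂) (sigPlainE A d' w σ (l ++ [(i, PB.or c₁ c₂)]))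
      refine (mcMove_or_iff (reD A d') w i c₁ c₂ _).2 ?_
      show sigPlainE A d' w σ (l ++ [(i, PB.or c₁ c₂)]) = (i, c₁) ∨
        sigPlainE A d' w σ (l ++ [(i, PB.or c₁ c₂)]) = (i, c₂)
      rw [sigPlainE_or A d' w σ _ i c₁ c₂ e]
      by_cases hx : c₁.sat (Sfun A w evE σ (Msim A w evE σ (l ++ [(i, PB.or c₁ c₂)])))
      · rw [if_pos hx]; exact Or.inl rfl
      · rw [if_neg hx]; exact Or.inr rfl
  · intro l i c₁ c₂ j q₀ hish hlast hMlast hij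
    have e : l.getLast?.getD (0, PB.atom A.init) = (i, PB.or c₁ c₂) := by
      rw [hlast]; rfl
    constructor
    · intro hx
      show sigPlainE A d' w σ l = _
      rw [sigPlainE_or A d' w σ l i c₁ c₂ e, if_pos hx]
    · intro hx
      show sigPlainE A d' w σ l = _
      rw [sigPlainE_or A d' w σ l i c₁ c₂ e, if_neg hx]

theorem accepts_transfer {Sig Gam : Type} (A : AltAutomaton Sig Gam)
    (d' : A.Q → Sig → PB A.Q) (hq : ∀ q a, (A.delta q a).Equiv (d' q a)) (w : ℕ → Sig) :
    A.Accepts w ↔ (reD A d').Accepts w := by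
  constructor
  · exact evewins_transfer A d' hq w
  · exact fun h =>
      evewins_transfer (reD A d') A.delta (fun q a v => (hq q a v).symm) w h

theorem take_succ_getElem {P : Type} {l : List P} {k : ℕ} (hk : k < l.length) :
    l.take (k + 1) = l.take k ++ [l[k]'hk] := by
  rw [List.take_succ]
  simp [List.getElem?_eq_getElem hk]

theorem chain_fst_le_getLast {Sig Gam : Type} {A : AltAutomaton Sig Gam} {w : ℕ → Sig}
    {m : List (ℕ × PB A.Q)} (hc : m.Chain' (mcMove A w)) {z : ℕ × PB A.Q}
    (hl : m.getLast? = some z) : ∀ k (hk : k < m.length), (m[k]'hk).1 ≤ z.1 := by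
  have H : ∀ d k (hk : k < m.length), m.length - 1 - k = d → (m[k]'hk).1 ≤ z.1 := by
    intro d
    induction d with
    | zero =>
      intro k hk hd
      have hk1 : k + 1 = m.length := by omega
      rw [getLast?_getElem hl hk1]
    | succ d ih =>
      intro k hk hd
      have hk1 : k + 1 < m.length := by omega
      have hstep := List.isChain_iff_getElem.1 hc k (by omega)
      have h1 := mcMove_fst_le hstep
      have h2 := ih (k + 1) hk1 (by omega)
      omega
  exact fun k hk => H (m.length - 1 - k) k hk rfl

theorem follow_eq_atom {Sig Gam : Type} (A : AltAutomaton Sig Gam) (w : ℕ → Sig)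
    (τ : UStrat Sig A.Q) (hs : List (ℕ × PB A.Q)) (j : ℕ) (q : A.Q)
    (e : hs.getLast?.getD (0, PB.atom A.init) = (j, PB.atom q)) :
    follow A w τ hs = (j + 1, A.delta q (w j)) := by
  unfold follow
  rw [e]

theorem follow_eq_and {Sig Gam : Type} (A : AltAutomaton Sig Gam) (w : ℕ → Sig)
    (τ : UStrat Sig A.Q) (hs : List (ℕ × PB A.Q)) (j : ℕ) (c₁ c₂ : PB A.Q)
    (e : hs.getLast?.getD (0, PB.atom A.init) = (j, PB.and c₁ c₂)) :
    follow A w τ hs = (j, τ (wordPrefix w j) (hs.map Prod.snd)) := by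
  unfold follow
  rw [e]

theorem follow_eq_or {Sig Gam : Type} (A : AltAutomaton Sig Gam) (w : ℕ → Sig)
    (τ : UStrat Sig A.Q) (hs : List (ℕ × PB A.Q)) (j : ℕ) (c₁ c₂ : PB A.Q)
    (e : hs.getLast?.getD (0, PB.atom A.init) = (j, PB.or c₁ c₂)) :
    follow A w τ hs = (j, τ (wordPrefix w j) (hs.map Prod.snd)) := by
  unfold follow
  rw [e]

theorem wordPrefix_congr {Sig : Type} {w w' : ℕ → Sig} {i : ℕ}
    (hag : ∀ j, j < i → w j = w' j) : wordPrefix w i = wordPrefix w' i := by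
  unfold wordPrefix
  exact List.map_congr_left (fun a ha => hag a (List.mem_range.1 ha))

theorem follow_congr_atom {Sig Gam : Type} (A : AltAutomaton Sig Gam) (τ : UStrat Sig A.Q)
    {w w' : ℕ → Sig} {N : ℕ} (hag : ∀ j, j < N → w j = w' j)
    (hs : List (ℕ × PB A.Q)) {j : ℕ} {q : A.Q}
    (e : hs.getLast?.getD (0, PB.atom A.init) = (j, PB.atom q)) (hj : j < N) :
    follow A w τ hs = follow A w' τ hs := by
  rw [follow_eq_atom A w τ hs j q e, follow_eq_atom A w' τ hs j q e, hag j hj]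

theorem follow_congr_nonatom {Sig Gam : Type} (A : AltAutomaton Sig Gam) (τ : UStrat Sig A.Q)
    {w w' : ℕ → Sig} {N : ℕ} (hag : ∀ j, j < N → w j = w' j)
    (hs : List (ℕ × PB A.Q)) {j : ℕ} {b : PB A.Q}
    (e : hs.getLast?.getD (0, PB.atom A.init) = (j, b)) (hb : b.theAtom? = none)
    (hj : j ≤ N) : follow A w τ hs = follow A w' τ hs := by
  have hwp : wordPrefix w j = wordPrefix w' j :=
    wordPrefix_congr (fun k hk => hag k (lt_of_lt_of_le hk hj))
  cases b with
  | atom q => simp [PB.theAtom?] at hb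
  | and c₁ c₂ =>
    rw [follow_eq_and A w τ hs j c₁ c₂ e, follow_eq_and A w' τ hs j c₁ c₂ e, hwp]
  | or c₁ c₂ =>
    rw [follow_eq_or A w τ hs j c₁ c₂ e, follow_eq_or A w' τ hs j c₁ c₂ e, hwp]

theorem okHist_congr {Sig Gam : Type} (A : AltAutomaton Sig Gam) (τ : UStrat Sig A.Q)
    (ev : ℕ × PB A.Q → Prop) {w w' : ℕ → Sig} {N : ℕ} (hag : ∀ j, j < N → w j = w' j)
    {m : List (ℕ × PB A.Q)} {z : ℕ × PB A.Q} (hl : m.getLast? = some z) (hz : z.1 ≤ N)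
    (h : OkHist (mcMove A w) ev (follow A w τ) (mI A) m) :
    OkHist (mcMove A w') ev (follow A w' τ) (mI A) m := by
  have hmono := chain_fst_le_getLast h.chain hl
  have hidx : ∀ k (hk : k + 1 < m.length) (jk : ℕ) (q : A.Q),
      m[k]'(by omega) = (jk, PB.atom q) → jk < N := by
    intro k hk jk q hxk
    have hstep := List.isChain_iff_getElem.1 h.chain k (by omega)
    rw [hxk] at hstep
    have hy := (mcMove_atom_iff A w jk q _).1 hstep
    have hle := hmono (k + 1) hk
    rw [hy] at hle
    simp only at hle
    omega
  refine ⟨h.head, ?_, ?_⟩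
  · refine List.isChain_iff_getElem.2 ?_
    intro k hk'
    have hk : k + 1 < m.length := by omega
    have hstep := List.isChain_iff_getElem.1 h.chain k hk'
    rcases hxk : (m[k]'(by omega) : ℕ × PB A.Q) with ⟨jk, bk⟩
    rw [hxk] at hstep
    cases bk with
    | atom q =>
      have hy := (mcMove_atom_iff A w jk q _).1 hstep
      rw [mcMove_atom_iff, hy, hag jk (hidx k hk jk q hxk)]
    | and c₁ c₂ =>
      rw [mcMove_and_iff]
      exact (mcMove_and_iff A w jk c₁ c₂ _).1 hstep
    | or c₁ c₂ =>
      rw [mcMove_or_iff]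
      exact (mcMove_or_iff A w jk c₁ c₂ _).1 hstep
  · intro k hk hev
    have hcons := h.cons k hk hev
    rw [hcons]
    have htake : (m.take (k + 1)).getLast?.getD (0, PB.atom A.init) = m[k]'(by omega) := by
      rw [take_succ_getElem (show k < m.length by omega), List.getLast?_concat]
      rfl
    rcases hxk : (m[k]'(by omega) : ℕ × PB A.Q) with ⟨jk, bk⟩
    rw [hxk] at htake
    cases hbk : bk.theAtom? with
    | some q =>
      have hbkat : bk = PB.atom q := PB.theAtom?_some hbk
      rw [hbkat] at htake hxk
      exact follow_congr_atom A τ hag _ htake (hidx k hk jk q hxk)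
    | none =>
      have hjk : jk ≤ N := by
        have := hmono k (by omega)
        rw [hxk] at this
        simp only at this
        omega
      exact follow_congr_nonatom A τ hag _ htake hbk hjk

theorem reachTo_congr_mp {Sig Gam : Type} (A : AltAutomaton Sig Gam) (τ : UStrat Sig A.Q)
    (ev : ℕ × PB A.Q → Prop) {w w' : ℕ → Sig} {N : ℕ} (hag : ∀ j, j < N → w j = w' j)
    {m : List (ℕ × PB A.Q)} {i : ℕ} {q : A.Q} (hiN : i ≤ N)
    (h : ReachTo A w ev (follow A w τ) m i q) :
    ReachTo A w' ev (follow A w' τ) m i q := by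
  obtain ⟨ext, hne, hok, hlast, hat⟩ := h
  refine ⟨ext, hne, ?_, hlast, hat⟩
  have hl2 : (m ++ ext).getLast? = some (i, PB.atom q) := by
    rw [List.getLast?_append_of_ne_nil _ hne]
    exact hlast
  exact okHist_congr A τ ev hag hl2 hiN hok

theorem reachTo_congr {Sig Gam : Type} (A : AltAutomaton Sig Gam) (τ : UStrat Sig A.Q)
    (ev : ℕ × PB A.Q → Prop) {w w' : ℕ → Sig} {N : ℕ} (hag : ∀ j, j < N → w j = w' j)
    {m : List (ℕ × PB A.Q)} {i : ℕ} {q : A.Q} (hiN : i ≤ N) :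
    ReachTo A w ev (follow A w τ) m i q ↔ ReachTo A w' ev (follow A w' τ) m i q :=
  ⟨reachTo_congr_mp A τ ev hag hiN,
   reachTo_congr_mp A τ ev (fun j hj => (hag j hj).symm) hiN⟩

theorem Sfun_congr {Sig Gam : Type} (A : AltAutomaton Sig Gam) (τ : UStrat Sig A.Q)
    (ev : ℕ × PB A.Q → Prop) {w w' : ℕ → Sig} {N : ℕ} (hag : ∀ j, j < N → w j = w' j)
    {m : List (ℕ × PB A.Q)} {j : ℕ} {q₀ : A.Q}
    (hl : m.getLast? = some (j, PB.atom q₀)) (hj : j + 1 ≤ N) :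
    ∀ q, Sfun A w ev (follow A w τ) m q ↔ Sfun A w' ev (follow A w' τ) m q := by
  have key : ∀ {v v' : ℕ → Sig}, (∀ k, k < N → v k = v' k) →
      ∀ q, Sfun A v ev (follow A v τ) m q → Sfun A v' ev (follow A v' τ) m q := by
    intro v v' hvag q hS
    obtain ⟨i, q₀', hl', hre⟩ := hS
    have hij : i = j := by
      rw [hl] at hl'
      exact (congrArg Prod.fst (Option.some.inj hl')).symm
    subst hij
    exact ⟨i, q₀', hl', reachTo_congr_mp A τ ev hvag (by omega) hre⟩
  exact fun q => ⟨key hag q, key (fun k hk => (hag k hk).symm) q⟩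

theorem choose_congr {α : Type} {p p' : α → Prop} (h : p = p') (hp : ∃ x, p x)
    (hp' : ∃ x, p' x) : hp.choose = hp'.choose := by
  subst h
  rfl

open Classical in
theorem simStep_congr {Sig Gam : Type} (A : AltAutomaton Sig Gam) (τ : UStrat Sig A.Q)
    (ev : ℕ × PB A.Q → Prop) {w w' : ℕ → Sig} {N : ℕ} (hag : ∀ j, j < N → w j = w' j)
    (m : List (ℕ × PB A.Q)) (x : ℕ × PB A.Q) (hx : x.1 ≤ N) :
    simStep A w ev (follow A w τ) m x = simStep A w' ev (follow A w' τ) m x := by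
  rcases x with ⟨i, b⟩
  cases b with
  | atom q =>
    have hpred : (fun ext : List (ℕ × PB A.Q) => ext ≠ [] ∧
        OkHist (mcMove A w) ev (follow A w τ) (mI A) (m ++ ext) ∧
        ext.getLast? = some (i, PB.atom q) ∧
        ext.filterMap (fun x => x.2.theAtom?) = [q]) =
        (fun ext : List (ℕ × PB A.Q) => ext ≠ [] ∧
        OkHist (mcMove A w') ev (follow A w' τ) (mI A) (m ++ ext) ∧
        ext.getLast? = some (i, PB.atom q) ∧
        ext.filterMap (fun x => x.2.theAtom?) = [q]) := by
      funext ext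
      apply propext
      constructor
      · rintro ⟨h1, h2, h3, h4⟩
        refine ⟨h1, ?_, h3, h4⟩
        exact okHist_congr A τ ev hag
          (by rw [List.getLast?_append_of_ne_nil _ h1]; exact h3) hx h2
      · rintro ⟨h1, h2, h3, h4⟩
        refine ⟨h1, ?_, h3, h4⟩
        exact okHist_congr A τ ev (fun j hj => (hag j hj).symm)
          (by rw [List.getLast?_append_of_ne_nil _ h1]; exact h3) hx h2
    by_cases h : ReachTo A w ev (follow A w τ) m i q
    · have h' : ReachTo A w' ev (follow A w' τ) m i q :=
        (reachTo_congr A τ ev hag hx).1 h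
      rw [simStep_atom, simStep_atom, dif_pos h, dif_pos h']
      exact congrArg (fun e => m ++ e) (choose_congr hpred h h')
    · have h' : ¬ ReachTo A w' ev (follow A w' τ) m i q :=
        fun hc => h ((reachTo_congr A τ ev hag hx).2 hc)
      rw [simStep_atom, simStep_atom, dif_neg h, dif_neg h']
  | and c₁ c₂ => rfl
  | or c₁ c₂ => rfl

theorem Msim_congr {Sig Gam : Type} (A : AltAutomaton Sig Gam) (τ : UStrat Sig A.Q)
    (ev : ℕ × PB A.Q → Prop) {w w' : ℕ → Sig} {N : ℕ} (hag : ∀ j, j < N → w j = w' j) :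
    ∀ (l : List (ℕ × PB A.Q)), (∀ x ∈ l, x.1 ≤ N) →
      Msim A w ev (follow A w τ) l = Msim A w' ev (follow A w' τ) l := by
  intro l
  induction l using List.reverseRecOn with
  | nil => intro _; rfl
  | append_singleton l x ih =>
    intro hall
    have h1 : Msim A w ev (follow A w τ) (l ++ [x]) =
        simStep A w ev (follow A w τ) (Msim A w ev (follow A w τ) l) x := by
      rw [Msim, List.foldl_append]
      rfl
    have h2 : Msim A w' ev (follow A w' τ) (l ++ [x]) =
        simStep A w' ev (follow A w' τ) (Msim A w' ev (follow A w' τ) l) x := by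
      rw [Msim, List.foldl_append]
      rfl
    rw [h1, h2, ih (fun y hy => hall y (List.mem_append_left _ hy)),
      simStep_congr A τ ev hag _ x (hall x (List.mem_append_right _ (List.mem_singleton_self x)))]

/-- Reconstructing a position history from the formula history. -/
def posSt {Q : Type} (h : List (PB Q)) : List (ℕ × PB Q) × ℕ :=
  h.foldl (fun st b => (st.1 ++ [(st.2, b)],
    if b.theAtom?.isSome then st.2 + 1 else st.2)) ([], 0)

def posOf {Q : Type} (h : List (PB Q)) : List (ℕ × PB Q) := (posSt h).1

theorem posSt_hist {Sig Gam : Type} (A' : AltAutomaton Sig Gam) (w : ℕ → Sig) :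
    ∀ (l : List (ℕ × PB A'.Q)) (z : ℕ × PB A'.Q),
      l.head? = some (0, PB.atom A'.init) → l.getLast? = some z →
      l.Chain' (mcMove A' w) →
      posSt (l.map Prod.snd) = (l, z.1 + (if z.2.theAtom?.isSome then 1 else 0)) := by
  intro l
  induction l using List.reverseRecOn with
  | nil => intro z h1 h2; simp at h2
  | append_singleton l x ih =>
    intro z hhead hlast hchain
    have hz : z = x := by
      rw [List.getLast?_concat] at hlast
      exact (Option.some.inj hlast).symm
    subst hz
    cases l with
    | nil =>
      have hx : z = (0, PB.atom A'.init) := by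
        simpa using hhead
      subst hx
      simp [posSt, PB.theAtom?]
    | cons a t =>
      have hne : a :: t ≠ [] := by simp
      obtain ⟨z', hz'⟩ : ∃ z', (a :: t).getLast? = some z' :=
        ⟨(a :: t).getLast hne, List.getLast?_eq_getLast hne⟩
      have hchain2 := List.isChain_append.1 hchain
      have hmv : mcMove A' w z' z :=
        hchain2.2.2 z' (Option.mem_def.2 hz') z (Option.mem_def.2 rfl)
      have hhead2 : (a :: t).head? = some (0, PB.atom A'.init) := by
        simpa using hhead
      have hih := ih z' hhead2 hz' hchain2.1
      have hfold : posSt ((a :: t ++ [z]).map Prod.snd) =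
          ((posSt ((a :: t).map Prod.snd)).1 ++ [((posSt ((a :: t).map Prod.snd)).2, z.2)],
           if z.2.theAtom?.isSome then (posSt ((a :: t).map Prod.snd)).2 + 1
           else (posSt ((a :: t).map Prod.snd)).2) := by
        rw [List.map_append]
        unfold posSt
        rw [List.foldl_append]
        rfl
      rw [hfold, hih]
      have hz1 : z'.1 + (if z'.2.theAtom?.isSome then 1 else 0) = z.1 := by
        rcases z' with ⟨j, bz⟩
        cases bz with
        | atom qz =>
          have := (mcMove_atom_iff A' w j qz z).1 hmv
          rw [this]
          simp [PB.theAtom?]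
        | and c₁ c₂ =>
          rcases (mcMove_and_iff A' w j c₁ c₂ z).1 hmv with rfl | rfl <;>
            simp [PB.theAtom?]
        | or c₁ c₂ =>
          rcases (mcMove_or_iff A' w j c₁ c₂ z).1 hmv with rfl | rfl <;>
            simp [PB.theAtom?]
      simp only
      rw [hz1]
      rcases z with ⟨jz, bz⟩
      by_cases hbz : bz.theAtom?.isSome <;> simp [hbz]

theorem posOf_hist {Sig Gam : Type} (A' : AltAutomaton Sig Gam) (w : ℕ → Sig)
    {l : List (ℕ × PB A'.Q)} {z : ℕ × PB A'.Q}
    (hhead : l.head? = some (0, PB.atom A'.init)) (hlast : l.getLast? = some z)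
    (hchain : l.Chain' (mcMove A' w)) : posOf (l.map Prod.snd) = l := by
  rw [posOf, posSt_hist A' w l z hhead hlast hchain]

open Classical in
noncomputable def tauE {Sig Gam : Type} [Nonempty Sig] (A : AltAutomaton Sig Gam)
    (τ : UStrat Sig A.Q) : UStrat Sig A.Q := fun u h =>
  match h.getLast? with
  | some (PB.or c₁ c₂) =>
      if c₁.sat (Sfun A (fun j => u.getD j (Classical.arbitrary Sig)) evE
          (follow A (fun j => u.getD j (Classical.arbitrary Sig)) τ)
          (Msim A (fun j => u.getD j (Classical.arbitrary Sig)) evE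
            (follow A (fun j => u.getD j (Classical.arbitrary Sig)) τ) (posOf h)))
      then c₁ else c₂
  | some (PB.and c₁ _) => c₁
  | _ => PB.atom A.init

open Classical in
theorem tauE_or {Sig Gam : Type} [Nonempty Sig] (A : AltAutomaton Sig Gam)
    (τ : UStrat Sig A.Q) (u : List Sig) (h : List (PB A.Q)) (c₁ c₂ : PB A.Q)
    (e : h.getLast? = some (PB.or c₁ c₂)) :
    tauE A τ u h =
      if c₁.sat (Sfun A (fun j => u.getD j (Classical.arbitrary Sig)) evE
          (follow A (fun j => u.getD j (Classical.arbitrary Sig)) τ)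
          (Msim A (fun j => u.getD j (Classical.arbitrary Sig)) evE
            (follow A (fun j => u.getD j (Classical.arbitrary Sig)) τ) (posOf h)))
      then c₁ else c₂ := by
  unfold tauE
  rw [e]

open Classical in
noncomputable def tauA {Sig Gam : Type} [Nonempty Sig] (A : AltAutomaton Sig Gam)
    (τ : UStrat Sig A.Q) : UStrat Sig A.Q := fun u h =>
  match h.getLast? with
  | some (PB.and c₁ c₂) =>
      if c₁.sat (fun q => ¬ Sfun A (fun j => u.getD j (Classical.arbitrary Sig)) evA
          (follow A (fun j => u.getD j (Classical.arbitrary Sig)) τ)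
          (Msim A (fun j => u.getD j (Classical.arbitrary Sig)) evA
            (follow A (fun j => u.getD j (Classical.arbitrary Sig)) τ) (posOf h)) q)
      then c₂ else c₁
  | some (PB.or c₁ _) => c₁
  | _ => PB.atom A.init

open Classical in
theorem tauA_and {Sig Gam : Type} [Nonempty Sig] (A : AltAutomaton Sig Gam)
    (τ : UStrat Sig A.Q) (u : List Sig) (h : List (PB A.Q)) (c₁ c₂ : PB A.Q)
    (e : h.getLast? = some (PB.and c₁ c₂)) :
    tauA A τ u h =
      if c₁.sat (fun q => ¬ Sfun A (fun j => u.getD j (Classical.arbitrary Sig)) evA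
          (follow A (fun j => u.getD j (Classical.arbitrary Sig)) τ)
          (Msim A (fun j => u.getD j (Classical.arbitrary Sig)) evA
            (follow A (fun j => u.getD j (Classical.arbitrary Sig)) τ) (posOf h)) q)
      then c₂ else c₁ := by
  unfold tauA
  rw [e]

open Classical in
theorem tauA_or {Sig Gam : Type} [Nonempty Sig] (A : AltAutomaton Sig Gam)
    (τ : UStrat Sig A.Q) (u : List Sig) (h : List (PB A.Q)) (c₁ c₂ : PB A.Q)
    (e : h.getLast? = some (PB.or c₁ c₂)) : tauA A τ u h = c₁ := by
  unfold tauA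
  rw [e]

theorem wordPrefix_getD_agree {Sig : Type} [Nonempty Sig] (w : ℕ → Sig) (i : ℕ) :
    ∀ k, k < i → (fun j => (wordPrefix w i).getD j (Classical.arbitrary Sig)) k = w k := by
  intro k hk
  simp only
  have hlen : k < (wordPrefix w i).length := by
    simpa [wordPrefix] using hk
  rw [List.getD_eq_getElem _ _ hlen]
  simp [wordPrefix]

theorem nondetHD_reD {Sig Gam : Type} [Nonempty Sig] (A : AltAutomaton Sig Gam)
    (d' : A.Q → Sig → PB A.Q) (hq : ∀ q a, (A.delta q a).Equiv (d' q a)) :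
    NondetHD A → NondetHD (reD A d') := by
  rintro ⟨τ, hτ⟩
  refine ⟨tauE A τ, ?_⟩
  intro w hwL
  have hwA : w ∈ A.lang :=
    evewins_transfer (reD A d') A.delta (fun q a v => (hq q a v).symm) w hwL
  have hσ := hτ w hwA
  refine mainE A d' hq w (follow A w τ) (follow (reD A d') w (tauE A τ)) hσ ?_ ?_
  · intro l x hish hev
    rcases x with ⟨i, b⟩
    cases b with
    | atom q => exact hev.elim
    | and c₁ c₂ => exact hev.elim
    | or c₁ c₂ =>
      have e : (l ++ [(i, PB.or c₁ c₂)]).getLast?.getD (0, PB.atom (reD A d').init) =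
          (i, PB.or c₁ c₂) := by
        rw [List.getLast?_concat]
        rfl
      have hfol : follow (reD A d') w (tauE A τ) (l ++ [(i, PB.or c₁ c₂)]) =
          (i, tauE A τ (wordPrefix w i)
            (List.map Prod.snd (l ++ [(i, PB.or c₁ c₂)]))) :=
        follow_eq_or (reD A d') w (tauE A τ) _ i c₁ c₂ e
      have e2 : (List.map Prod.snd (l ++ [(i, PB.or c₁ c₂)])).getLast? =
          some (PB.or c₁ c₂) := by
        rw [List.map_append]
        exact List.getLast?_concat
      rw [hfol, tauE_or A τ _ _ c₁ c₂ e2]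
      split_ifs with hx
      · exact (mcMove_or_iff (reD A d') w i c₁ c₂ _).2 (Or.inl rfl)
      · exact (mcMove_or_iff (reD A d') w i c₁ c₂ _).2 (Or.inr rfl)
  · intro l i c₁ c₂ j q₀ hish hlast hMlast hij
    have e : l.getLast?.getD (0, PB.atom (reD A d').init) = (i, PB.or c₁ c₂) := by
      rw [hlast]
      rfl
    have hfol : follow (reD A d') w (tauE A τ) l =
        ((i, tauE A τ (wordPrefix w i) (List.map Prod.snd l)) : ℕ × PB A.Q) :=
      follow_eq_or (reD A d') w (tauE A τ) l i c₁ c₂ e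
    have e2 : (List.map Prod.snd l).getLast? = some (PB.or c₁ c₂) := by
      rw [List.getLast?_map, hlast]
      rfl
    have hag := wordPrefix_getD_agree w i
    have hpos : posOf (List.map Prod.snd l) = l :=
      posOf_hist (reD A d') w hish.1 hlast hish.2
    have hbound : ∀ x ∈ l, x.1 ≤ i := by
      intro x hx
      obtain ⟨k, hk, rfl⟩ := List.mem_iff_getElem.1 hx
      have h9 := chain_fst_le_getLast (A := reD A d') hish.2 hlast k hk
      exact h9
    have hMw : Msim A (fun j => (wordPrefix w i).getD j (Classical.arbitrary Sig)) evE
        (follow A (fun j => (wordPrefix w i).getD j (Classical.arbitrary Sig)) τ) l =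
        Msim A w evE (follow A w τ) l :=
      Msim_congr A τ evE hag l hbound
    have hS := Sfun_congr A τ evE hag (m := Msim A w evE (follow A w τ) l) hMlast
      (show j + 1 ≤ i by omega)
    constructor
    · intro hx
      rw [hfol, tauE_or A τ _ _ c₁ c₂ e2, hpos, hMw]
      split_ifs with hcond
      · rfl
      · exact absurd ((PB.sat_congr hS).2 hx) hcond
    · intro hx
      rw [hfol, tauE_or A τ _ _ c₁ c₂ e2, hpos, hMw]
      split_ifs with hcond
      · exact absurd ((PB.sat_congr hS).1 hcond) hx
      · rfl

theorem univHD_reD {Sig Gam : Type} [Nonempty Sig] (A : AltAutomaton Sig Gam)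
    (d' : A.Q → Sig → PB A.Q) (hq : ∀ q a, (A.delta q a).Equiv (d' q a)) :
    UnivHD A → UnivHD (reD A d') := by
  rintro ⟨τ, hτ⟩
  refine ⟨tauA A τ, ?_⟩
  intro w hwL
  have hwA : w ∉ A.lang := fun hc => hwL ((accepts_transfer A d' hq w).1 hc)
  have hσ := hτ w hwA
  refine mainA A d' hq w (follow A w τ) (follow (reD A d') w (tauA A τ)) hσ ?_ ?_
  · intro l x hish hev
    rcases x with ⟨i, b⟩
    cases b with
    | atom q =>
      have e : (l ++ [(i, PB.atom q)]).getLast?.getD (0, PB.atom (reD A d').init) =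
          (i, PB.atom q) := by
        rw [List.getLast?_concat]
        rfl
      have hfol : follow (reD A d') w (tauA A τ) (l ++ [(i, PB.atom q)]) =
          (i + 1, d' q (w i)) :=
        follow_eq_atom (reD A d') w (tauA A τ) _ i q e
      rw [hfol]
      exact (mcMove_atom_iff (reD A d') w i q _).2 rfl
    | or c₁ c₂ => exact absurd trivial hev
    | and c₁ c₂ =>
      have e : (l ++ [(i, PB.and c₁ c₂)]).getLast?.getD (0, PB.atom (reD A d').init) =
          (i, PB.and c₁ c₂) := by
        rw [List.getLast?_concat]
        rfl
      have hfol : follow (reD A d') w (tauA A τ) (l ++ [(i, PB.and c₁ c₂)]) =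
          (i, tauA A τ (wordPrefix w i)
            (List.map Prod.snd (l ++ [(i, PB.and c₁ c₂)]))) :=
        follow_eq_and (reD A d') w (tauA A τ) _ i c₁ c₂ e
      have e2 : (List.map Prod.snd (l ++ [(i, PB.and c₁ c₂)])).getLast? =
          some (PB.and c₁ c₂) := by
        rw [List.map_append]
        exact List.getLast?_concat
      rw [hfol, tauA_and A τ _ _ c₁ c₂ e2]
      split_ifs with hx
      · exact (mcMove_and_iff (reD A d') w i c₁ c₂ _).2 (Or.inr rfl)
      · exact (mcMove_and_iff (reD A d') w i c₁ c₂ _).2 (Or.inl rfl)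
  · intro l i c₁ c₂ j q₀ hish hlast hMlast hij
    have e : l.getLast?.getD (0, PB.atom (reD A d').init) = (i, PB.and c₁ c₂) := by
      rw [hlast]
      rfl
    have hfol : follow (reD A d') w (tauA A τ) l =
        ((i, tauA A τ (wordPrefix w i) (List.map Prod.snd l)) : ℕ × PB A.Q) :=
      follow_eq_and (reD A d') w (tauA A τ) l i c₁ c₂ e
    have e2 : (List.map Prod.snd l).getLast? = some (PB.and c₁ c₂) := by
      rw [List.getLast?_map, hlast]
      rfl
    have hag := wordPrefix_getD_agree w i
    have hpos : posOf (List.map Prod.snd l) = l :=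
      posOf_hist (reD A d') w hish.1 hlast hish.2
    have hbound : ∀ x ∈ l, x.1 ≤ i := by
      intro x hx
      obtain ⟨k, hk, rfl⟩ := List.mem_iff_getElem.1 hx
      have h9 := chain_fst_le_getLast (A := reD A d') hish.2 hlast k hk
      exact h9
    have hMw : Msim A (fun j => (wordPrefix w i).getD j (Classical.arbitrary Sig)) evA
        (follow A (fun j => (wordPrefix w i).getD j (Classical.arbitrary Sig)) τ) l =
        Msim A w evA (follow A w τ) l :=
      Msim_congr A τ evA hag l hbound
    have hS := Sfun_congr A τ evA hag (m := Msim A w evA (follow A w τ) l) hMlast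
      (show j + 1 ≤ i by omega)
    have hS' : ∀ q, (¬ Sfun A (fun j => (wordPrefix w i).getD j (Classical.arbitrary Sig)) evA
        (follow A (fun j => (wordPrefix w i).getD j (Classical.arbitrary Sig)) τ)
        (Msim A w evA (follow A w τ) l) q) ↔
        (¬ Sfun A w evA (follow A w τ) (Msim A w evA (follow A w τ) l) q) :=
      fun q => not_congr (hS q)
    constructor
    · intro hx
      rw [hfol, tauA_and A τ _ _ c₁ c₂ e2, hpos, hMw]
      split_ifs with hcond
      · rfl
      · exact absurd ((PB.sat_congr hS').2 hx) hcond
    · intro hx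
      rw [hfol, tauA_and A τ _ _ c₁ c₂ e2, hpos, hMw]
      split_ifs with hcond
      · exact absurd ((PB.sat_congr hS').1 hcond) hx
      · rfl
end GFG
namespace GFG

/-- Replacing transition conditions by equivalent positive boolean formulas
preserves history-determinism of the nondeterminism and of the universality. -/
theorem statement4 {Sig Gam : Type} [Fintype Sig] [Nonempty Sig] [Fintype Gam] [Nonempty Gam]
    (A : AltAutomaton Sig Gam) (hreg : OmegaRegular A.W)
    (delta' : A.Q → Sig → PB A.Q)
    (hequiv : ∀ q a, (A.delta q a).Equiv (delta' q a)) :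
    (NondetHD A ↔ NondetHD { A with delta := delta' }) ∧
    (UnivHD A ↔ UnivHD { A with delta := delta' }) := by
  constructor
  · constructor
    · exact fun h => nondetHD_reD A delta' hequiv h
    · exact fun h => nondetHD_reD (reD A delta') A.delta
        (fun q a v => (hequiv q a v).symm) h
  · constructor
    · exact fun h => univHD_reD A delta' hequiv h
    · exact fun h => univHD_reD (reD A delta') A.delta
        (fun q a v => (hequiv q a v).symm) h

end GFG
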